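/- arXiv:2502.08286 — 3 statements merged into one kernel-verified Lean document; each statement's English description precedes it below -/
import Mathlib

section
/- Under the perfect-polytope hypotheses (a)–(c) on the system D y ≤ d, the symmetric cones satisfy Y⁺(y^r) ∩ Y⁺(y^k) = ∅ for all r ≠ k. Moreover, if z¹, …, z^N are arbitrary points with z^r ∈ Y⁺(y^r) for each r = 1, …, N, then Y is contained in the convex hull of {z¹, …, z^N}. -/
open Matrix

private lemma stmt15_sumSmulDot' {m : ℕ} {ι : Type*} (s : Finset ι) (c : ι → ℝ)
    (v : ι → (Fin m → ℝ)) (w : Fin m → ℝ) :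
    (∑ i ∈ s, c i • v i) ⬝ᵥ w = ∑ i ∈ s, c i * (v i ⬝ᵥ w) := by
  classical
  induction s using Finset.induction_on with
  | empty => simp
  | insert _ _ h ih =>
      rw [Finset.sum_insert h, Finset.sum_insert h, add_dotProduct, smul_dotProduct,
        smul_eq_mul, ih]

private lemma stmt15_sumSmulDot {m : ℕ} {ι : Type*} [Fintype ι] (c : ι → ℝ)
    (v : ι → (Fin m → ℝ)) (w : Fin m → ℝ) :
    (∑ i, c i • v i) ⬝ᵥ w = ∑ i, c i * (v i ⬝ᵥ w) :=
  stmt15_sumSmulDot' Finset.univ c v w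

private lemma stmt15_dotCont {m : ℕ} (v : Fin m → ℝ) :
    Continuous fun x : Fin m → ℝ => v ⬝ᵥ x := by
  simp only [dotProduct]
  exact continuous_finset_sum _ fun i _ => continuous_const.mul (continuous_apply i)

set_option maxHeartbeats 2000000 in
/-- Lemma 4 of the paper: the symmetric cones at distinct extreme points of a
perfect polytope are disjoint, and any selection of points from these cones has `Y` inside
its convex hull. -/
theorem stmt_15
    (m p : ℕ) (hm : 0 < m) (hmp : m < p)
    (D : Matrix (Fin p) (Fin m) ℝ) (d : Fin p → ℝ)
    (hrank : D.rank = m)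
    (Y : Set (Fin m → ℝ)) (hYdef : Y = {y | D.mulVec y ≤ d})
    -- (a) no redundant inequality, Y bounded with nonempty interior
    (hnored : ∀ i₀ : Fin p,
      ¬ ∀ y : Fin m → ℝ, (∀ i, i ≠ i₀ → D i ⬝ᵥ y ≤ d i) → D i₀ ⬝ᵥ y ≤ d i₀)
    (hYbd : Bornology.IsBounded Y) (hYint : (interior Y).Nonempty)
    -- (b) each subsystem of m independent rows has its apex at an extreme point of Y
    (hb : ∀ I : Finset (Fin p), I.card = m →
      LinearIndependent ℝ (fun i : {i : Fin p // i ∈ I} => D i.1) →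
      ∃ y₀ : Fin m → ℝ, (∀ i ∈ I, D i ⬝ᵥ y₀ = d i) ∧ y₀ ∈ Set.extremePoints ℝ Y)
    -- (c) exactly m facet hyperplanes pass through each extreme point of Y
    (hc : ∀ y ∈ Set.extremePoints ℝ Y,
      (Finset.univ.filter (fun i => D i ⬝ᵥ y = d i)).card = m)
    -- enumeration of the extreme points of Y
    (N : ℕ) (yext : Fin N → (Fin m → ℝ))
    (hyinj : Function.Injective yext)
    (hyrange : Set.range yext = Set.extremePoints ℝ Y)
    (Iset : Fin N → Finset (Fin p))
    (hIset : ∀ r, Iset r = Finset.univ.filter (fun i => D i ⬝ᵥ yext r = d i))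
    (Yplus : Fin N → Set (Fin m → ℝ))
    (hYplus : ∀ r, Yplus r = {y | ∀ i ∈ Iset r, d i ≤ D i ⬝ᵥ y}) :
    (∀ r k : Fin N, r ≠ k → Yplus r ∩ Yplus k = ∅) ∧
    (∀ zpt : Fin N → (Fin m → ℝ), (∀ r, zpt r ∈ Yplus r) →
      Y ⊆ convexHull ℝ (Set.range zpt)) := by
  classical
  -- membership in Y
  have hYmem : ∀ y : Fin m → ℝ, y ∈ Y ↔ ∀ i, D i ⬝ᵥ y ≤ d i := by
    intro y
    rw [hYdef]
    exact Iff.rfl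
  -- convexity and closedness of Y
  have hYconv : Convex ℝ Y := by
    intro x hx y hy a b ha hb' hab
    rw [hYmem] at hx hy ⊢
    intro i
    have h1 : D i ⬝ᵥ (a • x + b • y) = a * (D i ⬝ᵥ x) + b * (D i ⬝ᵥ y) := by
      rw [dotProduct_add, dotProduct_smul, dotProduct_smul, smul_eq_mul, smul_eq_mul]
    rw [h1]
    calc a * (D i ⬝ᵥ x) + b * (D i ⬝ᵥ y) ≤ a * d i + b * d i :=
          add_le_add (mul_le_mul_of_nonneg_left (hx i) ha)
            (mul_le_mul_of_nonneg_left (hy i) hb')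
      _ = d i := by rw [← add_mul, hab, one_mul]
  have hYclosed : IsClosed Y := by
    have : Y = ⋂ i, {y : Fin m → ℝ | D i ⬝ᵥ y ≤ d i} := by
      ext y
      rw [hYmem]
      simp
    rw [this]
    exact isClosed_iInter fun i => isClosed_le (stmt15_dotCont (D i)) continuous_const
  have hext : ∀ r, yext r ∈ Set.extremePoints ℝ Y := by
    intro r
    rw [← hyrange]
    exact Set.mem_range_self r
  have hinY : ∀ r, yext r ∈ Y := fun r => extremePoints_subset (hext r)
  have hcard : ∀ r, (Iset r).card = m := fun r => by rw [hIset r]; exact hc _ (hext r)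
  have hactive : ∀ r, ∀ i ∈ Iset r, D i ⬝ᵥ yext r = d i := by
    intro r i hi
    rw [hIset r] at hi
    exact (Finset.mem_filter.1 hi).2
  have hslack : ∀ r, ∀ j ∉ Iset r, D j ⬝ᵥ yext r < d j := by
    intro r j hj
    refine lt_of_le_of_ne ((hYmem _).1 (hinY r) j) ?_
    rw [hIset r] at hj
    simpa using hj
  -- local feasibility
  have hfeas : ∀ r (w : Fin m → ℝ), (∀ i ∈ Iset r, D i ⬝ᵥ w ≤ 0) →
      ∃ ε : ℝ, 0 < ε ∧ yext r + ε • w ∈ Y := by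
    intro r w hw
    have hUopen : IsOpen {x : Fin m → ℝ | ∀ j, j ∉ Iset r → D j ⬝ᵥ x < d j} := by
      have hU : {x : Fin m → ℝ | ∀ j, j ∉ Iset r → D j ⬝ᵥ x < d j}
          = ⋂ j, {x | j ∉ Iset r → D j ⬝ᵥ x < d j} := by
        ext x; simp [Set.mem_iInter]
      rw [hU]
      refine isOpen_iInter_of_finite fun j => ?_
      by_cases hj : j ∈ Iset r
      · simp [hj]
      · simp only [hj, not_false_iff, true_implies]
        exact isOpen_lt (stmt15_dotCont (D j)) continuous_const
    have hg : Continuous fun t : ℝ => yext r + t • w := by continuity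
    have h0 : (fun t : ℝ => yext r + t • w) 0 ∈
        {x : Fin m → ℝ | ∀ j, j ∉ Iset r → D j ⬝ᵥ x < d j} := by
      simp only [zero_smul, add_zero, Set.mem_setOf_eq]
      exact fun j hj => hslack r j hj
    obtain ⟨δ, hδ, hball⟩ := Metric.isOpen_iff.1 (hUopen.preimage hg) 0 h0
    refine ⟨δ / 2, by positivity, ?_⟩
    have hmem : yext r + (δ / 2) • w ∈
        {x : Fin m → ℝ | ∀ j, j ∉ Iset r → D j ⬝ᵥ x < d j} := by
      have : (δ / 2 : ℝ) ∈ Metric.ball (0 : ℝ) δ := by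
        simp only [Metric.mem_ball, Real.dist_eq, sub_zero]
        rw [abs_of_pos (by positivity)]
        linarith
      exact hball this
    rw [hYmem]
    intro i
    by_cases hi : i ∈ Iset r
    · have h1 : D i ⬝ᵥ (yext r + (δ / 2) • w) = D i ⬝ᵥ yext r + (δ / 2) * (D i ⬝ᵥ w) := by
        rw [dotProduct_add, dotProduct_smul, smul_eq_mul]
      rw [h1, hactive r i hi]
      nlinarith [hw i hi, hδ]
    · exact le_of_lt (hmem i hi)
  -- the active rows span everything
  have hspan : ∀ r, Submodule.span ℝ (Set.range fun i : {i // i ∈ Iset r} => D i.1) = ⊤ := by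
    intro r
    by_contra hne
    obtain ⟨f, hf0, hfbot⟩ := Submodule.exists_dual_map_eq_bot_of_lt_top
      (lt_top_iff_ne_top.2 hne) inferInstance
    set w : Fin m → ℝ := fun j => f (fun j' => if j = j' then 1 else 0) with hwdef
    have hfw : ∀ x : Fin m → ℝ, f x = x ⬝ᵥ w := by
      intro x
      rw [LinearMap.pi_apply_eq_sum_univ f x]
      simp [dotProduct, hwdef, smul_eq_mul]
    have hwne : w ≠ 0 := by
      intro hw0
      apply hf0
      refine LinearMap.ext fun x => ?_
      rw [hfw x, hw0, dotProduct_zero]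
      rfl
    have horthog : ∀ i ∈ Iset r, D i ⬝ᵥ w = 0 := by
      intro i hi
      rw [← hfw]
      have hmemspan : D i ∈ Submodule.span ℝ
          (Set.range fun i : {i // i ∈ Iset r} => D i.1) :=
        Submodule.subset_span ⟨⟨i, hi⟩, rfl⟩
      have := Submodule.mem_map_of_mem (f := f) hmemspan
      rw [hfbot] at this
      exact (Submodule.mem_bot ℝ).1 this
    obtain ⟨ε₁, hε₁, hm1⟩ := hfeas r w (fun i hi => le_of_eq (horthog i hi))
    obtain ⟨ε₂, hε₂, hm2⟩ := hfeas r (-w) (fun i hi => by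
      rw [dotProduct_neg, horthog i hi, neg_zero])
    have hseg : yext r ∈ openSegment ℝ (yext r + ε₁ • w) (yext r + ε₂ • (-w)) := by
      have hs : ε₁ + ε₂ ≠ 0 := by positivity
      refine ⟨ε₂ / (ε₁ + ε₂), ε₁ / (ε₁ + ε₂), by positivity, by positivity,
        by field_simp; ring, ?_⟩
      match_scalars <;> (field_simp; try ring)
    have hboth := (hext r).2 hm1 hm2 hseg
    have h1 : ε₁ • w = 0 := by
      have := hboth
      rwa [add_eq_left] at this
    rcases smul_eq_zero.1 h1 with h | h
    · exact absurd h hε₁.ne'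
    · exact hwne h
  have hfinrank : Module.finrank ℝ (Fin m → ℝ) = m := by
    rw [Module.finrank_fintype_fun_eq_card, Fintype.card_fin]
  have hcardcoe : ∀ r, Fintype.card {i // i ∈ Iset r} = m := by
    intro r
    rw [Fintype.card_coe, hcard r]
  have hindep : ∀ r, LinearIndependent ℝ (fun i : {i // i ∈ Iset r} => D i.1) := by
    intro r
    exact linearIndependent_of_top_le_span_of_card_eq_finrank (hspan r).ge
      (by rw [hcardcoe r, hfinrank])
  -- representation of any vector in terms of active rows
  have hrepr : ∀ r (c : Fin m → ℝ),
      ∃ lam : {i // i ∈ Iset r} → ℝ, ∑ i, lam i • D i.1 = c := by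
    intro r c
    have hc' : c ∈ Submodule.span ℝ (Set.range fun i : {i // i ∈ Iset r} => D i.1) := by
      rw [hspan r]; trivial
    exact (Submodule.mem_span_range_iff_exists_fun ℝ).1 hc'
  -- orthogonality to all active rows forces zero
  have horth : ∀ r (w : Fin m → ℝ), (∀ i ∈ Iset r, D i ⬝ᵥ w = 0) → w = 0 := by
    intro r w hw
    obtain ⟨lam, hlam⟩ := hrepr r w
    have h2 : (∑ i : {i // i ∈ Iset r}, lam i • D i.1) ⬝ᵥ w = 0 := by
      rw [stmt15_sumSmulDot]
      exact Finset.sum_eq_zero fun i _ => by rw [hw i.1 i.2, mul_zero]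
    rw [hlam] at h2
    exact dotProduct_self_eq_zero.mp h2
  -- dual vectors
  have hdual : ∀ r (i₀ : {i // i ∈ Iset r}), ∃ wv : Fin m → ℝ,
      ∀ i : {i // i ∈ Iset r}, D i.1 ⬝ᵥ wv = if i = i₀ then (-1 : ℝ) else 0 := by
    intro r i₀
    let T : (Fin m → ℝ) →ₗ[ℝ] ({i // i ∈ Iset r} → ℝ) :=
      { toFun := fun y i => D i.1 ⬝ᵥ y
        map_add' := fun x y => by funext i; exact dotProduct_add _ _ _
        map_smul' := fun c x => by funext i; simp [dotProduct_smul] }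
    have hTinj : Function.Injective T := by
      intro x y hxy
      have hxy0 : x - y = 0 := by
        refine horth r (x - y) fun i hi => ?_
        have := congrFun hxy (⟨i, hi⟩ : {i // i ∈ Iset r})
        simp only [T, LinearMap.coe_mk, AddHom.coe_mk] at this
        rw [dotProduct_sub, this, sub_self]
      exact sub_eq_zero.1 hxy0
    have hrange : LinearMap.range T = ⊤ := by
      apply Submodule.eq_top_of_finrank_eq
      rw [LinearMap.finrank_range_of_inj hTinj, hfinrank,
        Module.finrank_fintype_fun_eq_card, hcardcoe r]
    obtain ⟨wv, hwv⟩ := LinearMap.range_eq_top.1 hrange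
      (fun i => if i = i₀ then (-1 : ℝ) else 0)
    refine ⟨wv, fun i => ?_⟩
    have := congrFun hwv i
    simpa [T] using this
  -- Lemma A : any inactive constraint is strictly satisfied on the symmetric cone
  have hLemA : ∀ r, ∀ j ∉ Iset r, ∀ z : Fin m → ℝ,
      (∀ i ∈ Iset r, d i ≤ D i ⬝ᵥ z) → D j ⬝ᵥ z < d j := by
    intro r j hj z hz
    obtain ⟨lam, hlam⟩ := hrepr r (D j)
    have hDjdot : ∀ x : Fin m → ℝ,
        D j ⬝ᵥ x = ∑ i : {i // i ∈ Iset r}, lam i * (D i.1 ⬝ᵥ x) := by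
      intro x
      rw [← hlam, stmt15_sumSmulDot]
    have hlamneg : ∀ i₀ : {i // i ∈ Iset r}, lam i₀ ≤ 0 := by
      intro i₀
      by_contra hpos'
      push_neg at hpos'
      set I' : Finset (Fin p) := insert j ((Iset r).erase i₀.1) with hI'
      have hjer : j ∉ (Iset r).erase i₀.1 := fun h => hj (Finset.mem_of_mem_erase h)
      have hcardI' : I'.card = m := by
        rw [hI', Finset.card_insert_of_notMem hjer, Finset.card_erase_of_mem i₀.2, hcard r]
        omega
      have hspanI' : ⊤ ≤ Submodule.span ℝ (Set.range fun i : {i // i ∈ I'} => D i.1) := by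
        rw [← hspan r, Submodule.span_le]
        rintro x ⟨i, rfl⟩
        show D i.1 ∈ (Submodule.span ℝ (Set.range fun i : {i // i ∈ I'} => D i.1) :
          Set (Fin m → ℝ))
        by_cases hii : i = i₀
        · subst hii
          have hsum : lam i • D i.1 + ∑ i' ∈ Finset.univ.erase i, lam i' • D i'.1
              = D j :=
            (Finset.add_sum_erase Finset.univ (fun i' => lam i' • D i'.1)
              (Finset.mem_univ i)).trans hlam
          have hexpr : D i.1 = (lam i)⁻¹ •
              (D j - ∑ i' ∈ Finset.univ.erase i, lam i' • D i'.1) := by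
            rw [← hsum, add_sub_cancel_right, smul_smul, inv_mul_cancel₀ hpos'.ne', one_smul]
          rw [hexpr]
          refine Submodule.smul_mem _ _ (Submodule.sub_mem _ ?_
            (Submodule.sum_mem _ fun i' hi' => Submodule.smul_mem _ _ ?_))
          · exact Submodule.subset_span ⟨⟨j, Finset.mem_insert_self _ _⟩, rfl⟩
          · refine Submodule.subset_span ⟨⟨i'.1, ?_⟩, rfl⟩
            refine Finset.mem_insert_of_mem (Finset.mem_erase.2 ⟨?_, i'.2⟩)
            exact fun h => (Finset.mem_erase.1 hi').1 (Subtype.ext h)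
        · refine Submodule.subset_span ⟨⟨i.1, ?_⟩, rfl⟩
          refine Finset.mem_insert_of_mem (Finset.mem_erase.2 ⟨?_, i.2⟩)
          exact fun h => hii (Subtype.ext h)
      have hindepI' : LinearIndependent ℝ (fun i : {i // i ∈ I'} => D i.1) :=
        linearIndependent_of_top_le_span_of_card_eq_finrank hspanI'
          (by rw [Fintype.card_coe, hcardI', hfinrank])
      obtain ⟨y₀, hy₀eq, hy₀ext⟩ := hb I' hcardI' hindepI'
      have hy₀Y : y₀ ∈ Y := extremePoints_subset hy₀ext
      have hDjy₀ : D j ⬝ᵥ y₀ = d j := hy₀eq j (Finset.mem_insert_self _ _)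
      have hy₀i : ∀ i : {i // i ∈ Iset r}, i ≠ i₀ → D i.1 ⬝ᵥ y₀ = d i.1 := by
        intro i hi
        refine hy₀eq i.1 (Finset.mem_insert_of_mem (Finset.mem_erase.2 ⟨?_, i.2⟩))
        exact fun h => hi (Subtype.ext h)
      have hy₀i₀ : D i₀.1 ⬝ᵥ y₀ ≤ d i₀.1 := (hYmem y₀).1 hy₀Y i₀.1
      have hchain2 : ∑ i : {i // i ∈ Iset r}, lam i * (D i.1 ⬝ᵥ y₀)
          ≤ ∑ i : {i // i ∈ Iset r}, lam i * d i.1 := by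
        refine Finset.sum_le_sum fun i _ => ?_
        by_cases hi : i = i₀
        · subst hi
          exact mul_le_mul_of_nonneg_left hy₀i₀ hpos'.le
        · rw [hy₀i i hi]
      have hchain3 : ∑ i : {i // i ∈ Iset r}, lam i * d i.1 = D j ⬝ᵥ yext r := by
        rw [hDjdot (yext r)]
        exact Finset.sum_congr rfl fun i _ => by rw [hactive r i.1 i.2]
      have hfinal : d j < d j := by
        calc d j = ∑ i : {i // i ∈ Iset r}, lam i * (D i.1 ⬝ᵥ y₀) := by rw [← hDjy₀, hDjdot]
          _ ≤ ∑ i : {i // i ∈ Iset r}, lam i * d i.1 := hchain2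
          _ = D j ⬝ᵥ yext r := hchain3
          _ < d j := hslack r j hj
      exact lt_irrefl _ hfinal
    have hle : D j ⬝ᵥ z ≤ D j ⬝ᵥ yext r := by
      rw [hDjdot z, hDjdot (yext r)]
      refine Finset.sum_le_sum fun i _ => ?_
      have h1 := hz i.1 i.2
      have h2 := hactive r i.1 i.2
      nlinarith [hlamneg i]
    exact lt_of_le_of_lt hle (hslack r j hj)
  -- Krein-Milman
  have hYcomp : IsCompact Y := Metric.isCompact_of_isClosed_isBounded hYclosed hYbd
  have hKM : Y = convexHull ℝ (Set.range yext) := by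
    have hKM' := closure_convexHull_extremePoints hYcomp hYconv
    rw [← hyrange] at hKM'
    rw [← hKM', ((Set.finite_range yext).isClosed_convexHull (𝕜 := ℝ)).closure_eq]
  constructor
  · -- Part 1: disjointness of symmetric cones
    intro r k hrk
    rw [Set.eq_empty_iff_forall_notMem]
    rintro z ⟨hzr, hzk⟩
    rw [hYplus r] at hzr
    rw [hYplus k] at hzk
    have hyne : yext r ≠ yext k := fun h => hrk (hyinj h)
    have hIne : ¬(Iset r ⊆ Iset k) := by
      intro hsub
      have heq : Iset r = Iset k :=
        Finset.eq_of_subset_of_card_le hsub (by rw [hcard r, hcard k])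
      apply hyne
      have hsub0 : yext r - yext k = 0 := by
        refine horth r _ fun i hi => ?_
        rw [dotProduct_sub, hactive r i hi, hactive k i (heq ▸ hi), sub_self]
      exact sub_eq_zero.1 hsub0
    obtain ⟨i₀, hi₀r, hi₀k⟩ := Finset.not_subset.1 hIne
    have h1 : d i₀ ≤ D i₀ ⬝ᵥ z := hzr i₀ hi₀r
    have h2 : D i₀ ⬝ᵥ z < d i₀ := hLemA k i₀ hi₀k z hzk
    linarith
  · -- Part 2: Y is inside the convex hull of any selection
    intro zpt hzp y hy
    by_contra hnot
    have hZcl : IsClosed (convexHull ℝ (Set.range zpt)) :=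
      (Set.finite_range zpt).isClosed_convexHull (𝕜 := ℝ)
    obtain ⟨f, u, hfu1, hfu2⟩ :=
      geometric_hahn_banach_closed_point (convex_convexHull ℝ _) hZcl hnot
    have hNpos : 0 < N := by
      rcases Nat.eq_zero_or_pos N with h0 | h
      · exfalso
        obtain ⟨x, hx⟩ := hYint
        have hxY : x ∈ Y := interior_subset hx
        rw [hKM] at hxY
        subst h0
        rw [Set.range_eq_empty, convexHull_empty] at hxY
        exact hxY
      · exact h
    have hFinNE : Nonempty (Fin N) := Fin.pos_iff_nonempty.1 hNpos
    have hne : (Finset.univ : Finset (Fin N)).Nonempty := Finset.univ_nonempty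
    set M := Finset.univ.sup' hne (fun s => f (yext s)) with hM
    obtain ⟨k, -, hkM⟩ := Finset.exists_mem_eq_sup' hne (fun s => f (yext s))
    have hYleM : ∀ x ∈ Y, f x ≤ M := by
      intro x hx
      rw [hKM] at hx
      have hsub : Set.range yext ⊆ {x : Fin m → ℝ | f x ≤ M} := by
        rintro _ ⟨s, rfl⟩
        exact Finset.le_sup' (fun s => f (yext s)) (Finset.mem_univ s)
      have hconv : Convex ℝ {x : Fin m → ℝ | f x ≤ M} :=
        convex_halfSpace_le ⟨fun a b => map_add f a b, fun c a => map_smul f c a⟩ M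
      exact convexHull_min hsub hconv hx
    obtain ⟨c, hfc⟩ : ∃ c : Fin m → ℝ, ∀ x : Fin m → ℝ, f x = x ⬝ᵥ c := by
      refine ⟨fun j => f (fun j' => if j = j' then 1 else 0), fun x => ?_⟩
      have h := LinearMap.pi_apply_eq_sum_univ (f.toLinearMap) x
      simp only [ContinuousLinearMap.coe_coe] at h
      rw [h]
      simp [dotProduct, smul_eq_mul]
    have hcone : ∀ w : Fin m → ℝ, (∀ i ∈ Iset k, D i ⬝ᵥ w ≤ 0) → w ⬝ᵥ c ≤ 0 := by
      intro w hw
      obtain ⟨ε, hε, hmem⟩ := hfeas k w hw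
      have h1 : f (yext k + ε • w) ≤ M := hYleM _ hmem
      have h2 : f (yext k) = M := hkM.symm
      have h3 : f (yext k + ε • w) = f (yext k) + ε * f w := by
        rw [map_add, _root_.map_smul, smul_eq_mul]
      have h4 : f w ≤ 0 := by nlinarith
      rw [← hfc w]
      exact h4
    obtain ⟨lam, hlam⟩ := hrepr k c
    have hlamnn : ∀ i₀ : {i // i ∈ Iset k}, 0 ≤ lam i₀ := by
      intro i₀
      obtain ⟨wv, hwv⟩ := hdual k i₀
      have hwle : ∀ i ∈ Iset k, D i ⬝ᵥ wv ≤ 0 := by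
        intro i hi
        rw [hwv ⟨i, hi⟩]
        split <;> norm_num
      have hlec := hcone wv hwle
      have hdot : wv ⬝ᵥ c = -lam i₀ := by
        rw [dotProduct_comm, ← hlam, stmt15_sumSmulDot]
        rw [Finset.sum_eq_single i₀]
        · rw [hwv i₀]; simp
        · intro i _ hii
          rw [hwv i]
          simp [hii]
        · intro h; exact absurd (Finset.mem_univ i₀) h
      rw [hdot] at hlec
      linarith
    have hkey : yext k ⬝ᵥ c ≤ zpt k ⬝ᵥ c := by
      have hz := hzp k
      rw [hYplus k] at hz
      have e1 : yext k ⬝ᵥ c = ∑ i : {i // i ∈ Iset k}, lam i * (D i.1 ⬝ᵥ yext k) := by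
        rw [dotProduct_comm, ← hlam, stmt15_sumSmulDot]
      have e2 : zpt k ⬝ᵥ c = ∑ i : {i // i ∈ Iset k}, lam i * (D i.1 ⬝ᵥ zpt k) := by
        rw [dotProduct_comm, ← hlam, stmt15_sumSmulDot]
      rw [e1, e2]
      refine Finset.sum_le_sum fun i _ => ?_
      have h1 : d i.1 ≤ D i.1 ⬝ᵥ zpt k := hz i.1 i.2
      rw [hactive k i.1 i.2]
      exact mul_le_mul_of_nonneg_left h1 (hlamnn i)
    have hzku : f (zpt k) < u := hfu1 _ (subset_convexHull ℝ _ (Set.mem_range_self k))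
    have hyM : f y ≤ M := hYleM y hy
    have hfkey : f (yext k) ≤ f (zpt k) := by
      rw [hfc (yext k), hfc (zpt k)]
      exact hkey
    have hkM' : M = f (yext k) := hkM
    linarith
end

section
/- Under the perfect-polytope hypotheses (a)–(c) on D y ≤ d and with X nonempty and bounded, the minimum z* of z over X × Y equals the minimal value h* of h for which the system S(h) has a basic feasible solution (x₁*, …, x_{n+q}*, v₁*, …, v_{p+1}*) such that the set of rows {D_k : v_k* > 0, 1 ≤ k ≤ p} of D is either linearly independent or empty. Moreover, given such a solution of S(h*): if the set is nonempty, then x* = (x₁*, …, x_n*) together with any solution y* of the system {D y ≤ d, (Dᵀv*)·y = d·v*} (where v* = (v₁*, …, v_p*)) is an optimal solution of the disjoint bilinear programming problem, i.e. z(x*, y*) = h*; if the set is empty, then v₁* = ⋯ = v_{p+1}* = 0 and x* together with an arbitrary y ∈ Y is an optimal solution, i.e. z(x*, y) = h* for every y ∈ Y. -/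
open Matrix

open Finset




/-- Reduction of a nonnegative solution of a linear system to a "basic" one
with smaller support. -/
lemma exists_basic_reduction_aux {ι V : Type*} [Fintype ι] [DecidableEq ι]
    [AddCommGroup V] [Module ℝ V] (w : ι → V) :
    ∀ N (α : ι → ℝ), (∀ i, 0 ≤ α i) →
      (Finset.univ.filter (fun i => 0 < α i)).card ≤ N →
    ∃ β : ι → ℝ, (∀ i, 0 ≤ β i) ∧ (∑ i, β i • w i = ∑ i, α i • w i) ∧
      (∀ i, 0 < β i → 0 < α i) ∧
      LinearIndependent ℝ (fun i : {i // 0 < β i} => w i) := by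
  intro N
  induction N with
  | zero =>
    intro α hα hcard
    refine ⟨α, hα, rfl, fun i hi => hi, ?_⟩
    have hempty : ∀ i, ¬ 0 < α i := by
      intro i hi
      have : i ∈ Finset.univ.filter (fun i => 0 < α i) := by simp [hi]
      have := Finset.card_pos.mpr ⟨i, this⟩
      omega
    haveI : IsEmpty {i // 0 < α i} := ⟨fun i => hempty i.1 i.2⟩
    exact linearIndependent_empty_type
  | succ N ih =>
    intro α hα hcard
    by_cases hli : LinearIndependent ℝ (fun i : {i // 0 < α i} => w i)
    · exact ⟨α, hα, rfl, fun i hi => hi, hli⟩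
    · obtain ⟨g, hgsum, i₁, hgi₁⟩ := Fintype.not_linearIndependent_iff.mp hli
      set lam : ι → ℝ := fun i => if h : 0 < α i then g ⟨i, h⟩ else 0 with hlam
      have hlamsupp : ∀ i, lam i ≠ 0 → 0 < α i := by
        intro i hi
        by_contra h
        simp [hlam, h] at hi
      have hlamsum : ∑ i, lam i • w i = 0 := by
        have h1 : ∑ i : {i // 0 < α i}, lam i.1 • w i.1
            = ∑ i ∈ Finset.univ.filter (fun i => 0 < α i), lam i • w i :=
          (Finset.sum_subtype (p := fun i => 0 < α i) (Finset.univ.filter (fun i => 0 < α i)) (by simp) (fun i => lam i • w i)).symm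
        have h2 : ∑ i ∈ Finset.univ.filter (fun i => 0 < α i), lam i • w i
            = ∑ i, lam i • w i := by
          apply Finset.sum_subset (Finset.filter_subset _ _)
          intro i _ hi
          have : ¬ 0 < α i := by simpa using hi
          simp [hlam, this]
        rw [← h2, ← h1]
        rw [← hgsum]
        apply Finset.sum_congr rfl
        intro i _
        simp [hlam, i.2]
      have hlamne : lam i₁.1 ≠ 0 := by simp [hlam, i₁.2]; exact hgi₁
      -- get mu with a positive entry
      obtain ⟨mu, hmusum, hmusupp, imu, himu⟩ :
          ∃ mu : ι → ℝ, (∑ i, mu i • w i = 0) ∧ (∀ i, mu i ≠ 0 → 0 < α i) ∧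
            ∃ i, 0 < mu i := by
        rcases lt_trichotomy (lam i₁.1) 0 with h | h | h
        · refine ⟨-lam, by simp [hlamsum], fun i hi => hlamsupp i (by simpa using hi),
            i₁.1, by simpa using h⟩
        · exact absurd h hlamne
        · exact ⟨lam, hlamsum, hlamsupp, i₁.1, h⟩
      have hPne : (Finset.univ.filter (fun i => 0 < mu i)).Nonempty :=
        ⟨imu, by simp [himu]⟩
      obtain ⟨i₀, hi₀, hmin⟩ :=
        Finset.exists_min_image _ (fun i => α i / mu i) hPne
      have hmu₀ : 0 < mu i₀ := by simpa using hi₀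
      have hα₀ : 0 < α i₀ := hmusupp i₀ (ne_of_gt hmu₀)
      set t : ℝ := α i₀ / mu i₀ with ht
      have htpos : 0 < t := div_pos hα₀ hmu₀
      set β : ι → ℝ := fun i => α i - t * mu i with hβ
      have hβ0 : ∀ i, 0 ≤ β i := by
        intro i
        by_cases h : 0 < mu i
        · have := hmin i (by simp [h])
          have : t * mu i ≤ α i := (le_div_iff₀ h).mp this
          simp [hβ]; linarith
        · push_neg at h
          have : t * mu i ≤ 0 := mul_nonpos_of_nonneg_of_nonpos htpos.le h
          have := hα i
          simp [hβ]; linarith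
      have hβsum : ∑ i, β i • w i = ∑ i, α i • w i := by
        have : ∀ i, β i • w i = α i • w i - t • (mu i • w i) := by
          intro i
          simp [hβ, sub_smul, mul_smul]
        rw [Finset.sum_congr rfl fun i _ => this i, Finset.sum_sub_distrib,
          ← Finset.smul_sum, hmusum, smul_zero, sub_zero]
      have hβsupp : ∀ i, 0 < β i → 0 < α i := by
        intro i hi
        by_contra h
        have hα0 : α i = 0 := le_antisymm (by simpa using h) (hα i)
        have hmu0 : mu i = 0 := by
          by_contra h'
          exact h (hmusupp i h')
        simp [hβ, hα0, hmu0] at hi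
      have hβi₀ : β i₀ = 0 := by
        simp [hβ, ht, div_mul_cancel₀ _ (ne_of_gt hmu₀)]
      have hsub : (Finset.univ.filter (fun i => 0 < β i)) ⊆
          (Finset.univ.filter (fun i => 0 < α i)).erase i₀ := by
        intro i hi
        simp only [Finset.mem_filter, Finset.mem_univ, true_and] at hi
        refine Finset.mem_erase.mpr ⟨?_, by simp [hβsupp i hi]⟩
        rintro rfl
        rw [hβi₀] at hi; exact lt_irrefl 0 hi
      have hcard' : (Finset.univ.filter (fun i => 0 < β i)).card ≤ N := by
        have h1 := Finset.card_le_card hsub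
        have h2 : ((Finset.univ.filter (fun i => 0 < α i)).erase i₀).card
            = (Finset.univ.filter (fun i => 0 < α i)).card - 1 :=
          Finset.card_erase_of_mem (by simp [hα₀])
        omega
      obtain ⟨γ, hγ0, hγsum, hγsupp, hγli⟩ := ih β hβ0 hcard'
      exact ⟨γ, hγ0, hγsum.trans hβsum, fun i hi => hβsupp i (hγsupp i hi), hγli⟩


lemma li_finset_iff {ι V : Type*} [Fintype ι] [DecidableEq ι] [AddCommGroup V]
    [Module ℝ V] (v : ι → V) (I : Finset ι) :
    LinearIndependent ℝ (fun i : {i // i ∈ I} => v i.1) ↔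
      ∀ c : ι → ℝ, ∑ i ∈ I, c i • v i = 0 → ∀ i ∈ I, c i = 0 := by
  constructor
  · intro hli c hc i hi
    have hsum : ∑ j : {j // j ∈ I}, (fun j : {j // j ∈ I} => c j.1) j • v j.1 = 0 := by
      rw [← Finset.sum_subtype (p := fun j => j ∈ I) I (fun x => Iff.rfl)
        (fun j => c j • v j)]
      exact hc
    exact Fintype.linearIndependent_iff.mp hli _ hsum ⟨i, hi⟩
  · intro hc
    rw [Fintype.linearIndependent_iff]
    intro g hg i
    set c : ι → ℝ := fun j => if h : j ∈ I then g ⟨j, h⟩ else 0 with hcdef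
    have hsum : ∑ j ∈ I, c j • v j = 0 := by
      rw [Finset.sum_subtype (p := fun j => j ∈ I) I (fun x => Iff.rfl)
        (fun j => c j • v j)]
      rw [← hg]
      apply Finset.sum_congr rfl
      intro j _
      simp [hcdef, j.2]
    have := hc c hsum i.1 i.2
    simpa [hcdef, i.2] using this

lemma extend_rows {p m : ℕ} (D : Matrix (Fin p) (Fin m) ℝ) (hrank : D.rank = m) :
    ∀ dd (K : Finset (Fin p)), m - K.card ≤ dd →
      LinearIndependent ℝ (fun i : {i : Fin p // i ∈ K} => D i.1) →
    ∃ I : Finset (Fin p), K ⊆ I ∧ I.card = m ∧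
      LinearIndependent ℝ (fun i : {i : Fin p // i ∈ I} => D i.1) := by
  have hcardle : ∀ K : Finset (Fin p),
      LinearIndependent ℝ (fun i : {i : Fin p // i ∈ K} => D i.1) → K.card ≤ m := by
    intro K hK
    have := hK.fintype_card_le_finrank
    simpa [Module.finrank_fintype_fun_eq_card] using this
  intro dd
  induction dd with
  | zero =>
    intro K hle hK
    have := hcardle K hK
    exact ⟨K, Finset.Subset.refl _, by omega, hK⟩
  | succ dd ih =>
    intro K hle hK
    by_cases hcard : K.card = m
    · exact ⟨K, Finset.Subset.refl _, hcard, hK⟩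
    · have hlt : K.card < m := lt_of_le_of_ne (hcardle K hK) hcard
      have hexists : ∃ j : Fin p, D j ∉ Submodule.span ℝ (D '' (↑K : Set (Fin p))) := by
        by_contra hall
        push_neg at hall
        have hsub : Submodule.span ℝ (Set.range D) ≤
            Submodule.span ℝ (D '' (↑K : Set (Fin p))) := by
          rw [Submodule.span_le]
          rintro _ ⟨j, rfl⟩
          exact hall j
        have h1 : Module.finrank ℝ (Submodule.span ℝ (Set.range D)) = m := by
          have h1' := D.rank_eq_finrank_span_row
          rw [hrank] at h1'
          exact h1'.symm
        have h2 : Module.finrank ℝ (Submodule.span ℝ (D '' (↑K : Set (Fin p)))) ≤ K.card := by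
          classical
          have h3 := finrank_span_finset_le_card (R := ℝ) (Finset.image (fun i => D i) K)
          rw [Finset.coe_image] at h3
          exact le_trans h3 Finset.card_image_le
        have := Submodule.finrank_mono hsub
        omega
      obtain ⟨j, hj⟩ := hexists
      have hjK : j ∉ K := fun hjK => hj (Submodule.subset_span ⟨j, hjK, rfl⟩)
      have hK' : LinearIndependent ℝ (fun i : {i : Fin p // i ∈ insert j K} => D i.1) := by
        rw [li_finset_iff (fun i : Fin p => D i)]
        intro c hc i hi
        have hsplit : c j • D j + ∑ i ∈ K, c i • D i = 0 := by
          have h' := hc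
          rw [Finset.sum_insert hjK] at h'
          exact h'
        have hcj : c j = 0 := by
          by_contra hcj
          apply hj
          have : D j = (-(c j)⁻¹) • ∑ i ∈ K, c i • D i := by
            have hs : ∑ i ∈ K, c i • D i = -(c j • D j) :=
              eq_neg_of_add_eq_zero_right hsplit
            rw [hs, smul_neg, neg_smul, neg_neg, smul_smul, inv_mul_cancel₀ hcj,
              one_smul]
          rw [this]
          refine Submodule.smul_mem _ _ (Submodule.sum_mem _ ?_)
          intro i hiK
          exact Submodule.smul_mem _ _ (Submodule.subset_span ⟨i, hiK, rfl⟩)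
        rcases Finset.mem_insert.mp hi with rfl | hiK
        · exact hcj
        · have hKsum : ∑ i ∈ K, c i • D i = 0 := by
            rw [hcj, zero_smul, zero_add] at hsplit; exact hsplit
          exact (li_finset_iff D K).mp hK c hKsum i hiK
      have hle' : m - (insert j K).card ≤ dd := by
        rw [Finset.card_insert_of_notMem hjK]; omega
      obtain ⟨I, hKI, hIcard, hIli⟩ := ih (insert j K) hle' hK'
      exact ⟨I, le_trans (Finset.subset_insert _ _) hKI, hIcard, hIli⟩


lemma exists_extreme_minimizer {m : ℕ} (Y : Set (Fin m → ℝ)) (hYc : Convex ℝ Y)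
    (hcomp : IsCompact Y) (hne : Y.Nonempty) (c : Fin m → ℝ) :
    ∃ y₀ ∈ Set.extremePoints ℝ Y, ∀ y ∈ Y, c ⬝ᵥ y₀ ≤ c ⬝ᵥ y := by
  classical
  set lm : (Fin m → ℝ) →ₗ[ℝ] ℝ :=
    { toFun := fun y => -(c ⬝ᵥ y)
      map_add' := by intro y₁ y₂; simp [dotProduct_add]; ring
      map_smul' := by intro r y; simp [dotProduct_smul, smul_eq_mul] } with hlm
  set l : (Fin m → ℝ) →L[ℝ] ℝ := LinearMap.toContinuousLinearMap lm with hl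
  set B : Set (Fin m → ℝ) := l.toExposed Y with hB
  have hBexp : IsExposed ℝ Y B := ContinuousLinearMap.toExposed.isExposed
  have hcont : ContinuousOn (fun y : Fin m → ℝ => c ⬝ᵥ y) Y := by
    apply Continuous.continuousOn
    simp only [dotProduct]
    exact continuous_finset_sum _ fun i _ =>
      (continuous_const.mul (continuous_apply i))
  obtain ⟨y₁, hy₁Y, hy₁min⟩ := hcomp.exists_isMinOn hne hcont
  have hy₁B : y₁ ∈ B := by
    refine ⟨hy₁Y, fun y hy => ?_⟩
    have := hy₁min hy
    simp only [hl, hlm, LinearMap.coe_toContinuousLinearMap', LinearMap.coe_mk,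
      AddHom.coe_mk]
    simp only [Set.mem_setOf_eq] at this ⊢
    linarith [this]
  have hBne : B.Nonempty := ⟨y₁, hy₁B⟩
  have hBcomp : IsCompact B := hBexp.isCompact hcomp
  have hBconv : Convex ℝ B := hBexp.convex hYc
  obtain ⟨y₀, hy₀⟩ := hBcomp.extremePoints_nonempty hBne
  refine ⟨y₀, hBexp.isExtreme.extremePoints_subset_extremePoints hy₀, ?_⟩
  have hy₀B : y₀ ∈ B := extremePoints_subset hy₀
  intro y hy
  have := hy₀B.2 y hy
  simp only [hl, hlm, LinearMap.coe_toContinuousLinearMap', LinearMap.coe_mk,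
    AddHom.coe_mk] at this
  linarith


lemma perturb {p m : ℕ} (D : Matrix (Fin p) (Fin m) ℝ) (d : Fin p → ℝ)
    (y₀ : Fin m → ℝ) (hy₀ : D.mulVec y₀ ≤ d) (w : Fin m → ℝ)
    (hw : ∀ i : Fin p, D i ⬝ᵥ y₀ = d i → D i ⬝ᵥ w ≤ 0) :
    ∃ ε : ℝ, 0 < ε ∧ ∀ ε' : ℝ, 0 < ε' → ε' ≤ ε → D.mulVec (y₀ + ε' • w) ≤ d := by
  classical
  set S : Finset (Fin p) := Finset.univ.filter (fun i => 0 < D i ⬝ᵥ w) with hS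
  have hslack : ∀ i ∈ S, 0 < d i - D i ⬝ᵥ y₀ := by
    intro i hi
    simp only [hS, Finset.mem_filter] at hi
    rcases lt_or_eq_of_le (hy₀ i) with h | h
    · simpa [Matrix.mulVec, sub_pos] using h
    · exfalso
      have : D i ⬝ᵥ y₀ = d i := by simpa [Matrix.mulVec] using h
      linarith [hw i this, hi.2]
  by_cases hSne : S.Nonempty
  · set ε : ℝ := min 1 (S.inf' hSne (fun i => (d i - D i ⬝ᵥ y₀) / (D i ⬝ᵥ w))) with hε
    have hεpos : 0 < ε := by
      apply lt_min one_pos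
      rw [Finset.lt_inf'_iff]
      intro i hi
      have h1 := hslack i hi
      have h2 : 0 < D i ⬝ᵥ w := by
        simp only [hS, Finset.mem_filter] at hi; exact hi.2
      exact div_pos h1 h2
    refine ⟨ε, hεpos, fun ε' hε'0 hε'ε i => ?_⟩
    have hdot : D.mulVec (y₀ + ε' • w) i = D i ⬝ᵥ y₀ + ε' * (D i ⬝ᵥ w) := by
      simp [Matrix.mulVec_add, Matrix.mulVec_smul, Matrix.mulVec, smul_eq_mul]
    rw [hdot]
    by_cases hiw : 0 < D i ⬝ᵥ w
    · have hiS : i ∈ S := by simp [hS, hiw]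
      have h1 : ε ≤ (d i - D i ⬝ᵥ y₀) / (D i ⬝ᵥ w) :=
        le_trans (min_le_right _ _) (Finset.inf'_le _ hiS)
      have h2 : ε' ≤ (d i - D i ⬝ᵥ y₀) / (D i ⬝ᵥ w) := le_trans hε'ε h1
      have h3 : ε' * (D i ⬝ᵥ w) ≤ d i - D i ⬝ᵥ y₀ := (le_div_iff₀ hiw).mp h2
      linarith
    · push_neg at hiw
      have h1 : ε' * (D i ⬝ᵥ w) ≤ 0 := mul_nonpos_of_nonneg_of_nonpos hε'0.le hiw
      have h2 : D i ⬝ᵥ y₀ ≤ d i := by simpa [Matrix.mulVec] using hy₀ i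
      linarith
  · refine ⟨1, one_pos, fun ε' hε'0 hε'ε i => ?_⟩
    have hdot : D.mulVec (y₀ + ε' • w) i = D i ⬝ᵥ y₀ + ε' * (D i ⬝ᵥ w) := by
      simp [Matrix.mulVec_add, Matrix.mulVec_smul, Matrix.mulVec, smul_eq_mul]
    rw [hdot]
    have hiw : ¬ 0 < D i ⬝ᵥ w := fun h => hSne ⟨i, by simp [hS, h]⟩
    push_neg at hiw
    have h1 : ε' * (D i ⬝ᵥ w) ≤ 0 := mul_nonpos_of_nonneg_of_nonpos hε'0.le hiw
    have h2 : D i ⬝ᵥ y₀ ≤ d i := by simpa [Matrix.mulVec] using hy₀ i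
    linarith


lemma sum_dotProduct' {ι : Type*} {mm : ℕ} (s : Finset ι) (f : ι → (Fin mm → ℝ))
    (w : Fin mm → ℝ) : (∑ i ∈ s, f i) ⬝ᵥ w = ∑ i ∈ s, f i ⬝ᵥ w := by
  simp only [dotProduct, Finset.sum_apply, Finset.sum_mul]
  rw [Finset.sum_comm]

lemma vertex_dual {p m : ℕ} (hm : 0 < m) (D : Matrix (Fin p) (Fin m) ℝ)
    (d : Fin p → ℝ) (Y : Set (Fin m → ℝ)) (hY : Y = {y | D.mulVec y ≤ d})
    (hc : ∀ y ∈ Set.extremePoints ℝ Y,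
      (Finset.univ.filter (fun i => D i ⬝ᵥ y = d i)).card = m)
    (c : Fin m → ℝ) (y₀ : Fin m → ℝ) (hy₀ : y₀ ∈ Set.extremePoints ℝ Y)
    (hmin : ∀ y ∈ Y, c ⬝ᵥ y₀ ≤ c ⬝ᵥ y)
    (hperturb : ∀ w : Fin m → ℝ, (∀ i : Fin p, D i ⬝ᵥ y₀ = d i → D i ⬝ᵥ w ≤ 0) →
      ∃ ε : ℝ, 0 < ε ∧ ∀ ε' : ℝ, 0 < ε' → ε' ≤ ε → D.mulVec (y₀ + ε' • w) ≤ d) :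
    ∃ (I : Finset (Fin p)) (v : Fin p → ℝ),
      I.card = m ∧ (∀ i ∈ I, D i ⬝ᵥ y₀ = d i) ∧
      LinearIndependent ℝ (fun i : {i : Fin p // i ∈ I} => D i.1) ∧
      (∀ k, 0 ≤ v k) ∧ (∀ k, v k ≠ 0 → k ∈ I) ∧
      (∑ k, v k • D k = -c) := by
  classical
  set I : Finset (Fin p) := Finset.univ.filter (fun i => D i ⬝ᵥ y₀ = d i) with hI
  have hIcard : I.card = m := hc y₀ hy₀
  have hIactive : ∀ i ∈ I, D i ⬝ᵥ y₀ = d i := by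
    intro i hi; simp only [hI, Finset.mem_filter] at hi; exact hi.2
  have hactiveI : ∀ i : Fin p, D i ⬝ᵥ y₀ = d i → i ∈ I := by
    intro i hi; simp [hI, hi]
  have hy₀Y : y₀ ∈ Y := extremePoints_subset hy₀
  have hy₀ex := (mem_extremePoints).mp hy₀
  -- the evaluation map
  set T : (Fin m → ℝ) →ₗ[ℝ] ({i : Fin p // i ∈ I} → ℝ) :=
    { toFun := fun w => fun i => D i.1 ⬝ᵥ w
      map_add' := by intro w₁ w₂; funext i; simp [dotProduct_add]
      map_smul' := by intro r w; funext i; simp [dotProduct_smul] } with hT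
  have hcards : Fintype.card {i : Fin p // i ∈ I} = m :=
    (Fintype.card_coe I).trans hIcard
  -- Step A : rows indexed by I are linearly independent
  have hIli : LinearIndependent ℝ (fun i : {i : Fin p // i ∈ I} => D i.1) := by
    by_contra hdep
    obtain ⟨u, husum, i₁, hui₁⟩ := Fintype.not_linearIndependent_iff.mp hdep
    -- T is not injective
    have hTnotinj : ¬ Function.Injective T := by
      intro hinj
      have hsurj : Function.Surjective T :=
        (LinearMap.injective_iff_surjective_of_finrank_eq_finrank
          (by simp [hcards, Module.finrank_fintype_fun_eq_card])).mp hinj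
      obtain ⟨w, hw⟩ := hsurj (Pi.single i₁ 1)
      have h0 : (∑ i : {i : Fin p // i ∈ I}, u i • D i.1) ⬝ᵥ w = 0 := by
        rw [husum]; simp
      rw [sum_dotProduct'] at h0
      have h1 : ∀ i : {i : Fin p // i ∈ I}, (u i • D i.1) ⬝ᵥ w
          = u i * (Pi.single i₁ (1:ℝ) : {i : Fin p // i ∈ I} → ℝ) i := by
        intro i
        have h2 : D i.1 ⬝ᵥ w = (Pi.single i₁ (1:ℝ) : {i : Fin p // i ∈ I} → ℝ) i :=
          congrFun hw i
        rw [smul_dotProduct, h2, smul_eq_mul]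
      rw [Finset.sum_congr rfl fun i _ => h1 i] at h0
      simp [Pi.single_apply, Finset.sum_ite_eq'] at h0
      exact hui₁ h0
    -- obtain a nonzero kernel element
    have hker : LinearMap.ker T ≠ ⊥ := by
      intro h
      exact hTnotinj (LinearMap.ker_eq_bot.mp h)
    obtain ⟨w, hwker, hwne⟩ := Submodule.exists_mem_ne_zero_of_ne_bot hker
    have hwact : ∀ i : Fin p, D i ⬝ᵥ y₀ = d i → D i ⬝ᵥ w = 0 := by
      intro i hi
      have := congrFun (LinearMap.mem_ker.mp hwker) ⟨i, hactiveI i hi⟩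
      simpa [hT] using this
    obtain ⟨ε₁, hε₁, hy₁⟩ := hperturb w (fun i hi => le_of_eq (hwact i hi))
    obtain ⟨ε₂, hε₂, hy₂⟩ := hperturb (-w) (fun i hi => by
      rw [dotProduct_neg, hwact i hi, neg_zero])
    set ε := min ε₁ ε₂ with hε
    have hεpos : 0 < ε := lt_min hε₁ hε₂
    have hy₁Y : y₀ + ε • w ∈ Y := by
      rw [hY]; exact hy₁ ε hεpos (min_le_left _ _)
    have hy₂Y : y₀ + ε • (-w) ∈ Y := by
      rw [hY]; exact hy₂ ε hεpos (min_le_right _ _)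
    have hseg : y₀ ∈ openSegment ℝ (y₀ + ε • w) (y₀ + ε • (-w)) := by
      refine ⟨1/2, 1/2, by norm_num, by norm_num, by norm_num, ?_⟩
      module
    have := (hy₀ex.2 _ hy₁Y _ hy₂Y hseg).1
    apply hwne
    have h2 : ε • w = 0 := by
      have := congrArg (fun u => u - y₀) this
      simpa using this
    rcases smul_eq_zero.mp h2 with h | h
    · exact absurd h (ne_of_gt hεpos)
    · exact h
  -- Step B : representation of -c
  haveI : Nonempty {i : Fin p // i ∈ I} := by
    rw [← Fintype.card_pos_iff, hcards]; exact hm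
  have hspan : Submodule.span ℝ (Set.range (fun i : {i : Fin p // i ∈ I} => D i.1)) = ⊤ :=
    hIli.span_eq_top_of_card_eq_finrank
      (by simp [hcards, Module.finrank_fintype_fun_eq_card])
  have hmemspan : ∀ x : Fin m → ℝ, ∃ u : {i : Fin p // i ∈ I} → ℝ,
      ∑ i, u i • D i.1 = x := by
    intro x
    have : x ∈ Submodule.span ℝ (Set.range (fun i : {i : Fin p // i ∈ I} => D i.1)) := by
      rw [hspan]; trivial
    exact (Submodule.mem_span_range_iff_exists_fun ℝ).mp this
  obtain ⟨u, husum⟩ := hmemspan (-c)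
  -- Step C : T is bijective
  have hTinj : Function.Injective T := by
    rw [← LinearMap.ker_eq_bot]
    rw [Submodule.eq_bot_iff]
    intro w hw
    have hwact : ∀ i : {i : Fin p // i ∈ I}, D i.1 ⬝ᵥ w = 0 := by
      intro i
      exact congrFun (LinearMap.mem_ker.mp hw) i
    obtain ⟨t, ht⟩ := hmemspan w
    have : w ⬝ᵥ w = 0 := by
      conv_lhs => rw [← ht]
      rw [sum_dotProduct']
      apply Finset.sum_eq_zero
      intro i _
      rw [smul_dotProduct, ht, hwact i, smul_zero]
    exact (dotProduct_self_eq_zero).mp this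
  have hTsurj : Function.Surjective T :=
    (LinearMap.injective_iff_surjective_of_finrank_eq_finrank
      (by simp [hcards, Module.finrank_fintype_fun_eq_card])).mp hTinj
  -- Step D : nonnegativity of the coefficients
  have hunn : ∀ i : {i : Fin p // i ∈ I}, 0 ≤ u i := by
    intro i₀
    by_contra hneg
    push_neg at hneg
    obtain ⟨w, hw⟩ := hTsurj (fun i => if i = i₀ then (-1 : ℝ) else 0)
    have hwval : ∀ i : {i : Fin p // i ∈ I}, D i.1 ⬝ᵥ w
        = if i = i₀ then (-1:ℝ) else 0 := fun i => congrFun hw i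
    obtain ⟨ε, hεpos, hy'⟩ := hperturb w (fun i hi => by
      have := hwval ⟨i, hactiveI i hi⟩
      rw [this]
      split <;> norm_num)
    have hy'Y : y₀ + ε • w ∈ Y := by rw [hY]; exact hy' ε hεpos le_rfl
    have hmin' := hmin _ hy'Y
    have hcw : c ⬝ᵥ w = u i₀ := by
      have h1 : -∑ i, u i • D i.1 = c := by rw [husum, neg_neg]
      rw [← h1, neg_dotProduct, sum_dotProduct']
      have : ∀ i : {i : Fin p // i ∈ I}, (u i • D i.1) ⬝ᵥ w
          = if i = i₀ then -(u i) else 0 := by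
        intro i
        rw [smul_dotProduct, hwval i, smul_eq_mul]
        split <;> ring
      rw [Finset.sum_congr rfl fun i _ => this i]
      simp [Finset.sum_ite_eq']
    have hdot : c ⬝ᵥ (y₀ + ε • w) = c ⬝ᵥ y₀ + ε * (c ⬝ᵥ w) := by
      rw [dotProduct_add, dotProduct_smul, smul_eq_mul]
    rw [hdot, hcw] at hmin'
    nlinarith
  -- assemble
  set v : Fin p → ℝ := fun k => if h : k ∈ I then u ⟨k, h⟩ else 0 with hv
  refine ⟨I, v, hIcard, hIactive, hIli, ?_, ?_, ?_⟩
  · intro k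
    by_cases h : k ∈ I
    · simp only [hv, dif_pos h]; exact hunn ⟨k, h⟩
    · simp [hv, h]
  · intro k hk
    by_contra h
    simp [hv, h] at hk
  · have h1 : ∑ k : Fin p, v k • D k = ∑ k ∈ I, v k • D k := by
      refine (Finset.sum_subset (Finset.subset_univ I) ?_).symm
      intro k _ hk
      simp [hv, hk]
    have h2 : ∑ k ∈ I, v k • D k = ∑ i : {i : Fin p // i ∈ I}, u i • D i.1 := by
      rw [Finset.sum_subtype (p := fun k => k ∈ I) I (fun x => Iff.rfl)
        (fun k => v k • D k)]
      apply Finset.sum_congr rfl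
      intro i _
      simp only [hv, dif_pos i.2]
    rw [h1, h2, husum]


lemma col_sum_eval {n m q p : ℕ}
    (C : Matrix (Fin n) (Fin m) ℝ) (A : Matrix (Fin q) (Fin n) ℝ)
    (D : Matrix (Fin p) (Fin m) ℝ)
    (a : Fin q → ℝ) (d : Fin p → ℝ) (g : Fin n → ℝ) (e : Fin m → ℝ)
    (col : (Fin n ⊕ Fin q ⊕ Fin p ⊕ Unit) → ((Fin q → ℝ) × (Fin m → ℝ) × ℝ))
    (hcol₁ : ∀ j : Fin n, col (Sum.inl j) = (fun i => A i j, fun j' => C j j', g j))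
    (hcol₂ : ∀ i : Fin q, col (Sum.inr (Sum.inl i)) = (Pi.single i 1, 0, 0))
    (hcol₃ : ∀ k : Fin p, col (Sum.inr (Sum.inr (Sum.inl k))) = (0, fun j' => D k j', -(d k)))
    (hcol₄ : col (Sum.inr (Sum.inr (Sum.inr ()))) = (0, 0, 1))
    (α : (Fin n ⊕ Fin q ⊕ Fin p ⊕ Unit) → ℝ) :
    ∑ idx, α idx • col idx =
      (fun i => (∑ j : Fin n, A i j * α (Sum.inl j)) + α (Sum.inr (Sum.inl i)),
       fun j => (∑ i : Fin n, C i j * α (Sum.inl i)) +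
         (∑ k : Fin p, D k j * α (Sum.inr (Sum.inr (Sum.inl k)))),
       (∑ i : Fin n, g i * α (Sum.inl i)) -
         (∑ k : Fin p, d k * α (Sum.inr (Sum.inr (Sum.inl k)))) +
         α (Sum.inr (Sum.inr (Sum.inr ())))) := by
  classical
  refine Prod.ext ?_ (Prod.ext ?_ ?_)
  · funext i
    rw [Prod.fst_sum]
    rw [Fintype.sum_sum_type, Fintype.sum_sum_type, Fintype.sum_sum_type]
    simp only [hcol₁, hcol₂, hcol₃, hcol₄, Prod.smul_fst, smul_zero,
      Finset.sum_const_zero, add_zero, Finset.univ_unique, Finset.sum_singleton]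
    simp only [Finset.sum_apply, Pi.add_apply, Pi.smul_apply, smul_eq_mul,
      Pi.single_apply, mul_ite, mul_one, mul_zero, Finset.sum_ite_eq,
      Finset.mem_univ, if_true, Pi.zero_apply]
    rw [Finset.sum_congr rfl (fun j _ => mul_comm (α (Sum.inl j)) (A i j))]
  · funext j
    rw [Prod.snd_sum, Prod.fst_sum]
    rw [Fintype.sum_sum_type, Fintype.sum_sum_type, Fintype.sum_sum_type]
    simp only [hcol₁, hcol₂, hcol₃, hcol₄, Prod.smul_fst, Prod.smul_snd, smul_zero,
      Finset.sum_const_zero, add_zero, zero_add, Finset.univ_unique,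
      Finset.sum_singleton]
    simp only [Finset.sum_apply, Pi.add_apply, Pi.smul_apply, smul_eq_mul,
      Pi.zero_apply]
    rw [Finset.sum_congr rfl (fun i _ => mul_comm (α (Sum.inl i)) (C i j)),
      Finset.sum_congr rfl
        (fun k _ => mul_comm (α (Sum.inr (Sum.inr (Sum.inl k)))) (D k j))]
  · rw [Prod.snd_sum, Prod.snd_sum]
    rw [Fintype.sum_sum_type, Fintype.sum_sum_type, Fintype.sum_sum_type]
    simp only [hcol₁, hcol₂, hcol₃, hcol₄, Prod.smul_fst, Prod.smul_snd,
      smul_zero, smul_eq_mul, mul_zero, mul_one, Finset.sum_const_zero, add_zero,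
      zero_add, Finset.univ_unique, Finset.sum_singleton]
    have h1 : ∀ k : Fin p, α (Sum.inr (Sum.inr (Sum.inl k))) * -(d k)
        = -(d k * α (Sum.inr (Sum.inr (Sum.inl k)))) := fun k => by ring
    rw [Finset.sum_congr rfl (fun k _ => h1 k), Finset.sum_neg_distrib,
      Finset.sum_congr rfl (fun i _ => mul_comm (α (Sum.inl i)) (g i))]
    ring


/-- Theorem 9 of the paper: the optimal value of the disjoint bilinear
programming problem with a perfect disjoint subset equals the minimal `h` for which `S(h)`
has a basic feasible solution whose positive `v`-components index linearly independent (or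
no) rows of `D`, and the optimal solutions are recovered from such a basic solution. -/
theorem stmt_18
    (n m q p : ℕ) (hn : 0 < n) (hm : 0 < m) (hq : 0 < q) (hmp : m < p)
    (C : Matrix (Fin n) (Fin m) ℝ) (A : Matrix (Fin q) (Fin n) ℝ)
    (D : Matrix (Fin p) (Fin m) ℝ)
    (a : Fin q → ℝ) (d : Fin p → ℝ) (g : Fin n → ℝ) (e : Fin m → ℝ)
    (hrank : D.rank = m)
    (z : (Fin n → ℝ) → (Fin m → ℝ) → ℝ)
    (hz : ∀ x y, z x y = x ⬝ᵥ C.mulVec y + g ⬝ᵥ x + e ⬝ᵥ y)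
    (X : Set (Fin n → ℝ)) (Y : Set (Fin m → ℝ))
    (hX : X = {x | A.mulVec x ≤ a ∧ 0 ≤ x})
    (hYdef : Y = {y | D.mulVec y ≤ d})
    -- perfect polytope hypotheses (a)-(c)
    (hnored : ∀ i₀ : Fin p,
      ¬ ∀ y : Fin m → ℝ, (∀ i, i ≠ i₀ → D i ⬝ᵥ y ≤ d i) → D i₀ ⬝ᵥ y ≤ d i₀)
    (hYbd : Bornology.IsBounded Y) (hYint : (interior Y).Nonempty)
    (hb : ∀ I : Finset (Fin p), I.card = m →
      LinearIndependent ℝ (fun i : {i : Fin p // i ∈ I} => D i.1) →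
      ∃ y₀ : Fin m → ℝ, (∀ i ∈ I, D i ⬝ᵥ y₀ = d i) ∧ y₀ ∈ Set.extremePoints ℝ Y)
    (hc : ∀ y ∈ Set.extremePoints ℝ Y,
      (Finset.univ.filter (fun i => D i ⬝ᵥ y = d i)).card = m)
    (hXne : X.Nonempty) (hXbd : Bornology.IsBounded X)
    -- the columns of the matrix W of system S(h)
    (col : (Fin n ⊕ Fin q ⊕ Fin p ⊕ Unit) → ((Fin q → ℝ) × (Fin m → ℝ) × ℝ))
    (hcol₁ : ∀ j : Fin n, col (Sum.inl j) = (fun i => A i j, fun j' => C j j', g j))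
    (hcol₂ : ∀ i : Fin q, col (Sum.inr (Sum.inl i)) = (Pi.single i 1, 0, 0))
    (hcol₃ : ∀ k : Fin p, col (Sum.inr (Sum.inr (Sum.inl k))) = (0, fun j' => D k j', -(d k)))
    (hcol₄ : col (Sum.inr (Sum.inr (Sum.inr ()))) = (0, 0, 1))
    -- feasibility for the system S(h)
    (Feas : ℝ → ((Fin n ⊕ Fin q ⊕ Fin p ⊕ Unit) → ℝ) → Prop)
    (hFeas : ∀ (h : ℝ) (α : (Fin n ⊕ Fin q ⊕ Fin p ⊕ Unit) → ℝ), Feas h α ↔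
      (∀ idx, 0 ≤ α idx) ∧
      (∀ i : Fin q,
        (∑ j : Fin n, A i j * α (Sum.inl j)) + α (Sum.inr (Sum.inl i)) = a i) ∧
      (∀ j : Fin m,
        (∑ i : Fin n, C i j * α (Sum.inl i)) +
          (∑ k : Fin p, D k j * α (Sum.inr (Sum.inr (Sum.inl k)))) = -(e j)) ∧
      ((∑ i : Fin n, g i * α (Sum.inl i)) -
          (∑ k : Fin p, d k * α (Sum.inr (Sum.inr (Sum.inl k)))) +
          α (Sum.inr (Sum.inr (Sum.inr ()))) = h))
    (IsBasicSol : ((Fin n ⊕ Fin q ⊕ Fin p ⊕ Unit) → ℝ) → Prop)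
    (hBasic : ∀ α, IsBasicSol α ↔
      LinearIndependent ℝ (fun idx : {idx // 0 < α idx} => col idx.1)) :
    (∀ zstar : ℝ,
      IsLeast (Set.image2 z X Y) zstar ↔
        IsLeast {h : ℝ | ∃ α, Feas h α ∧ IsBasicSol α ∧
          (LinearIndependent ℝ
            (fun k : {k : Fin p // 0 < α (Sum.inr (Sum.inr (Sum.inl k)))} => D k.1) ∨
           ∀ k : Fin p, ¬ 0 < α (Sum.inr (Sum.inr (Sum.inl k))))} zstar) ∧
    (∀ zstar : ℝ, IsLeast (Set.image2 z X Y) zstar →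
      ∀ α, Feas zstar α → IsBasicSol α →
        (LinearIndependent ℝ
          (fun k : {k : Fin p // 0 < α (Sum.inr (Sum.inr (Sum.inl k)))} => D k.1) ∨
         ∀ k : Fin p, ¬ 0 < α (Sum.inr (Sum.inr (Sum.inl k)))) →
        (((∃ k : Fin p, 0 < α (Sum.inr (Sum.inr (Sum.inl k)))) →
          ∀ y : Fin m → ℝ, D.mulVec y ≤ d →
            (∑ j : Fin m,
              (∑ k : Fin p, D k j * α (Sum.inr (Sum.inr (Sum.inl k)))) * y j) =
              (∑ k : Fin p, d k * α (Sum.inr (Sum.inr (Sum.inl k)))) →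
            z (fun j => α (Sum.inl j)) y = zstar) ∧
         ((¬ ∃ k : Fin p, 0 < α (Sum.inr (Sum.inr (Sum.inl k)))) →
          (∀ k : Fin p, α (Sum.inr (Sum.inr (Sum.inl k))) = 0) ∧
          α (Sum.inr (Sum.inr (Sum.inr ()))) = 0 ∧
          ∀ y ∈ Y, z (fun j => α (Sum.inl j)) y = zstar))) := by
  classical
  -- basic facts about Y
  have hYconv : Convex ℝ Y := by
    rw [hYdef]
    intro y₁ hy₁ y₂ hy₂ s t hs ht hst
    intro i
    have h1 : (D.mulVec (s • y₁ + t • y₂)) i = s * (D.mulVec y₁ i) + t * (D.mulVec y₂ i) := by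
      simp [Matrix.mulVec_add, Matrix.mulVec_smul, smul_eq_mul]
    rw [h1]
    calc s * (D.mulVec y₁ i) + t * (D.mulVec y₂ i)
        ≤ s * d i + t * d i := by
          apply add_le_add
          · exact mul_le_mul_of_nonneg_left (hy₁ i) hs
          · exact mul_le_mul_of_nonneg_left (hy₂ i) ht
      _ = d i := by rw [← add_mul, hst, one_mul]
  have hYclosed : IsClosed Y := by
    rw [hYdef]
    have : {y : Fin m → ℝ | D.mulVec y ≤ d} = ⋂ i, {y | D i ⬝ᵥ y ≤ d i} := by
      ext y
      simp only [Set.mem_setOf_eq, Set.mem_iInter]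
      constructor
      · intro hy i; simpa [Matrix.mulVec] using hy i
      · intro hy i; simpa [Matrix.mulVec] using hy i
    rw [this]
    refine isClosed_iInter fun i => ?_
    have hcont : Continuous (fun y : Fin m → ℝ => D i ⬝ᵥ y) := by
      simp only [dotProduct]
      exact continuous_finset_sum _ fun j _ =>
        (continuous_const.mul (continuous_apply j))
    exact isClosed_le hcont continuous_const
  have hYcomp : IsCompact Y := Metric.isCompact_of_isClosed_isBounded hYclosed hYbd
  have hYne : Y.Nonempty := hYint.mono interior_subset
  have hfeasY : ∀ y ∈ Y, D.mulVec y ≤ d := by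
    intro y hy; rw [hYdef] at hy; exact hy
  -- Feasibility as a vector equation
  have hFeasSum : ∀ (h : ℝ) (α : (Fin n ⊕ Fin q ⊕ Fin p ⊕ Unit) → ℝ),
      Feas h α ↔ ((∀ idx, 0 ≤ α idx) ∧
        ∑ idx, α idx • col idx = (a, fun j => -(e j), h)) := by
    intro h α
    rw [hFeas, col_sum_eval C A D a d g e col hcol₁ hcol₂ hcol₃ hcol₄ α]
    simp only [Prod.mk.injEq, funext_iff]
    try tauto
  -- x-part of a feasible solution lies in X
  have hXmem : ∀ (h : ℝ) α, Feas h α → (fun j => α (Sum.inl j)) ∈ X := by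
    intro h α hα
    obtain ⟨hnn, h1, -, -⟩ := (hFeas h α).mp hα
    rw [hX]
    constructor
    · intro i
      have h2 : A.mulVec (fun j => α (Sum.inl j)) i
          = ∑ j : Fin n, A i j * α (Sum.inl j) := by
        simp [Matrix.mulVec, dotProduct]
      rw [h2]
      have := hnn (Sum.inr (Sum.inl i))
      linarith [h1 i]
    · intro j
      exact hnn (Sum.inl j)
  -- sum swapping identity
  have hswap : ∀ (v : Fin p → ℝ) (y : Fin m → ℝ),
      ∑ j, (∑ k, D k j * v k) * y j = ∑ k, v k * (D k ⬝ᵥ y) := by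
    intro v y
    rw [Finset.sum_congr rfl (fun j _ => Finset.sum_mul _ _ (y j)), Finset.sum_comm]
    refine Finset.sum_congr rfl fun k _ => ?_
    rw [dotProduct, Finset.mul_sum]
    exact Finset.sum_congr rfl fun j _ => by ring
  -- the value of z at a feasible solution
  have hzval : ∀ (h : ℝ) α, Feas h α → ∀ y : Fin m → ℝ,
      (∑ j, (∑ k, D k j * α (Sum.inr (Sum.inr (Sum.inl k)))) * y j
        = ∑ k, d k * α (Sum.inr (Sum.inr (Sum.inl k)))) →
      z (fun j => α (Sum.inl j)) y = h - α (Sum.inr (Sum.inr (Sum.inr ()))) := by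
    intro h α hα y hy
    obtain ⟨hnn, h1, h2, h3⟩ := (hFeas h α).mp hα
    rw [hz]
    have e1 : (fun j => α (Sum.inl j)) ⬝ᵥ C.mulVec y
        = ∑ j : Fin m, (∑ i : Fin n, C i j * α (Sum.inl i)) * y j := by
      simp only [dotProduct, Matrix.mulVec]
      have hterm : ∀ i : Fin n, α (Sum.inl i) * (∑ j, C i j * y j)
          = ∑ j, (C i j * α (Sum.inl i)) * y j := by
        intro i
        rw [Finset.mul_sum]
        exact Finset.sum_congr rfl fun j _ => by ring
      rw [Finset.sum_congr rfl fun i _ => hterm i, Finset.sum_comm]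
      exact Finset.sum_congr rfl fun j _ => (Finset.sum_mul _ _ _).symm
    have e2 : ∑ j : Fin m, (∑ i : Fin n, C i j * α (Sum.inl i)) * y j
        = -(e ⬝ᵥ y) - ∑ k, d k * α (Sum.inr (Sum.inr (Sum.inl k))) := by
      have hterm : ∀ j : Fin m, (∑ i : Fin n, C i j * α (Sum.inl i)) * y j
          = -(e j * y j)
            - (∑ k, D k j * α (Sum.inr (Sum.inr (Sum.inl k)))) * y j := by
        intro j
        have := h2 j
        have h4 : (∑ i : Fin n, C i j * α (Sum.inl i))
            = -(e j) - ∑ k, D k j * α (Sum.inr (Sum.inr (Sum.inl k))) := by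
          linarith
        rw [h4]; ring
      rw [Finset.sum_congr rfl fun j _ => hterm j, Finset.sum_sub_distrib, hy]
      simp [dotProduct, Finset.sum_neg_distrib]
    have e3 : g ⬝ᵥ (fun j => α (Sum.inl j)) = ∑ i : Fin n, g i * α (Sum.inl i) := by
      simp [dotProduct]
    rw [e1, e2, e3]
    linarith
  -- Lemma B : every h in the candidate set dominates some bilinear value
  have hLemB : ∀ (h : ℝ) α, Feas h α →
      (LinearIndependent ℝ
        (fun k : {k : Fin p // 0 < α (Sum.inr (Sum.inr (Sum.inl k)))} => D k.1) ∨
       ∀ k : Fin p, ¬ 0 < α (Sum.inr (Sum.inr (Sum.inl k)))) →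
      ∃ x ∈ X, ∃ y ∈ Y, z x y ≤ h := by
    intro h α hα hcond
    obtain ⟨hnn, h1, h2, h3⟩ := (hFeas h α).mp hα
    refine ⟨(fun j => α (Sum.inl j)), hXmem h α hα, ?_⟩
    have hvnn : ∀ k, 0 ≤ α (Sum.inr (Sum.inr (Sum.inl k))) :=
      fun k => hnn (Sum.inr (Sum.inr (Sum.inl k)))
    have hlast : 0 ≤ α (Sum.inr (Sum.inr (Sum.inr ()))) :=
      hnn (Sum.inr (Sum.inr (Sum.inr ())))
    rcases hcond with hli | hzero
    · -- independent case
      set K : Finset (Fin p) :=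
        Finset.univ.filter (fun k => 0 < α (Sum.inr (Sum.inr (Sum.inl k)))) with hK
      have hKli : LinearIndependent ℝ (fun i : {i : Fin p // i ∈ K} => D i.1) := by
        have hcmp := hli.comp
          (fun i : {i : Fin p // i ∈ K} =>
            (⟨i.1, by
              have h := i.2
              simp only [hK, Finset.mem_filter] at h
              exact h.2⟩ : {k : Fin p // 0 < α (Sum.inr (Sum.inr (Sum.inl k)))}))
          (by
            intro a' b' hab
            rcases a' with ⟨a', ha'⟩
            rcases b' with ⟨b', hb'⟩
            simpa using congrArg Subtype.val hab)
        exact hcmp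
      obtain ⟨I, hKI, hIcard, hIli⟩ := extend_rows D hrank m K (Nat.sub_le _ _) hKli
      obtain ⟨y₀, hy₀act, hy₀ext⟩ := hb I hIcard hIli
      have hy₀Y : y₀ ∈ Y := extremePoints_subset hy₀ext
      refine ⟨y₀, hy₀Y, ?_⟩
      have hsumc : ∑ j, (∑ k, D k j * α (Sum.inr (Sum.inr (Sum.inl k)))) * y₀ j
          = ∑ k, d k * α (Sum.inr (Sum.inr (Sum.inl k))) := by
        rw [hswap]
        refine Finset.sum_congr rfl fun k _ => ?_
        by_cases hk : 0 < α (Sum.inr (Sum.inr (Sum.inl k)))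
        · have hkK : k ∈ K := by simp [hK, hk]
          have : D k ⬝ᵥ y₀ = d k := hy₀act k (hKI hkK)
          rw [this]; ring
        · have : α (Sum.inr (Sum.inr (Sum.inl k))) = 0 :=
            le_antisymm (not_lt.mp hk) (hvnn k)
          rw [this]; ring
      have := hzval h α hα y₀ hsumc
      linarith
    · -- all-zero case
      obtain ⟨y, hy⟩ := hYne
      refine ⟨y, hy, ?_⟩
      have hv0 : ∀ k, α (Sum.inr (Sum.inr (Sum.inl k))) = 0 :=
        fun k => le_antisymm (not_lt.mp (hzero k)) (hvnn k)
      have hsumc : ∑ j, (∑ k, D k j * α (Sum.inr (Sum.inr (Sum.inl k)))) * y j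
          = ∑ k, d k * α (Sum.inr (Sum.inr (Sum.inl k))) := by
        simp [hv0]
      have := hzval h α hα y hsumc
      linarith
  -- Key lemma : for each x in X, the minimal value of z x over Y belongs to the
  -- candidate set
  have hKey : ∀ x ∈ X, ∃ h : ℝ,
      (∃ α, Feas h α ∧ IsBasicSol α ∧
        (LinearIndependent ℝ
          (fun k : {k : Fin p // 0 < α (Sum.inr (Sum.inr (Sum.inl k)))} => D k.1) ∨
         ∀ k : Fin p, ¬ 0 < α (Sum.inr (Sum.inr (Sum.inl k))))) ∧
      ∀ y ∈ Y, h ≤ z x y := by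
    intro x hx
    have hx' := hx
    rw [hX] at hx'
    obtain ⟨hAx, hx0⟩ := hx'
    set c : Fin m → ℝ := fun j => (∑ i, C i j * x i) + e j with hcdef
    obtain ⟨y₀, hy₀ext, hy₀min⟩ := exists_extreme_minimizer Y hYconv hYcomp hYne c
    have hy₀Y : y₀ ∈ Y := extremePoints_subset hy₀ext
    obtain ⟨I, v, hIcard, hIactive, hIli, hvnn, hvsupp, hvsum⟩ :=
      vertex_dual hm D d Y hYdef hc c y₀ hy₀ext hy₀min
        (fun w hw => perturb D d y₀ (hfeasY y₀ hy₀Y) w hw)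
    set α₀ : (Fin n ⊕ Fin q ⊕ Fin p ⊕ Unit) → ℝ :=
      Sum.elim x (Sum.elim (fun i => a i - ∑ j, A i j * x j)
        (Sum.elim v (fun _ => 0))) with hα₀
    set h₀ : ℝ := (∑ i, g i * x i) - ∑ k, d k * v k with hh₀
    have hvcomp : ∀ j : Fin m, ∑ k, v k * D k j = -(c j) := by
      intro j
      have := congrFun hvsum j
      simpa [Finset.sum_apply, smul_eq_mul] using this
    have hFeas₀ : Feas h₀ α₀ := by
      rw [hFeas]
      refine ⟨?_, ?_, ?_, ?_⟩
      · rintro (j | i | k | u)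
        · exact hx0 j
        · have h2 : A.mulVec x i = ∑ j, A i j * x j := by
            simp [Matrix.mulVec, dotProduct]
          have := hAx i
          rw [h2] at this
          simpa [hα₀] using sub_nonneg.mpr this
        · exact hvnn k
        · simp [hα₀]
      · intro i
        simp only [hα₀, Sum.elim_inl, Sum.elim_inr]
        ring
      · intro j
        simp only [hα₀, Sum.elim_inl, Sum.elim_inr]
        have h5 : ∑ k, D k j * v k = ∑ k, v k * D k j :=
          Finset.sum_congr rfl fun k _ => mul_comm _ _
        have h6 := hvcomp j
        simp only [hcdef] at h6
        rw [h5, h6]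
        ring
      · simp only [hα₀, Sum.elim_inl, Sum.elim_inr, hh₀]
        ring
    have hsumc₀ : ∑ j, (∑ k, D k j * α₀ (Sum.inr (Sum.inr (Sum.inl k)))) * y₀ j
        = ∑ k, d k * α₀ (Sum.inr (Sum.inr (Sum.inl k))) := by
      simp only [hα₀, Sum.elim_inr, Sum.elim_inl]
      rw [hswap]
      refine Finset.sum_congr rfl fun k _ => ?_
      by_cases hk : v k = 0
      · rw [hk]; ring
      · have : D k ⬝ᵥ y₀ = d k := hIactive k (hvsupp k hk)
        rw [this]; ring
    have hxeq : (fun j => α₀ (Sum.inl j)) = x := funext fun j => rfl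
    have hzx : z x y₀ = h₀ := by
      have := hzval h₀ α₀ hFeas₀ y₀ hsumc₀
      rw [hxeq] at this
      simpa [hα₀] using this
    have hzc : ∀ y : Fin m → ℝ, z x y = c ⬝ᵥ y + ∑ i, g i * x i := by
      intro y
      rw [hz]
      have e1 : x ⬝ᵥ C.mulVec y = ∑ j : Fin m, (∑ i : Fin n, C i j * x i) * y j := by
        simp only [dotProduct, Matrix.mulVec]
        have hterm : ∀ i : Fin n, x i * (∑ j, C i j * y j)
            = ∑ j, (C i j * x i) * y j := by
          intro i
          rw [Finset.mul_sum]
          exact Finset.sum_congr rfl fun j _ => by ring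
        rw [Finset.sum_congr rfl fun i _ => hterm i, Finset.sum_comm]
        exact Finset.sum_congr rfl fun j _ => (Finset.sum_mul _ _ _).symm
      have e2 : c ⬝ᵥ y = (∑ j : Fin m, (∑ i : Fin n, C i j * x i) * y j) + e ⬝ᵥ y := by
        simp only [dotProduct, hcdef]
        rw [← Finset.sum_add_distrib]
        exact Finset.sum_congr rfl fun j _ => by ring
      have e3 : g ⬝ᵥ x = ∑ i, g i * x i := by simp [dotProduct]
      rw [e1, e2, e3]
      ring
    -- reduce to a basic solution
    obtain ⟨β, hβnn, hβsum, hβsupp, hβli⟩ :=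
      exists_basic_reduction_aux col
        ((Finset.univ.filter (fun i => 0 < α₀ i)).card) α₀
        (fun i => ((hFeas h₀ α₀).mp hFeas₀).1 i) le_rfl
    have hFeasβ : Feas h₀ β := by
      rw [hFeasSum]
      refine ⟨hβnn, ?_⟩
      rw [hβsum]
      exact ((hFeasSum h₀ α₀).mp hFeas₀).2
    have hBasicβ : IsBasicSol β := (hBasic β).mpr hβli
    have hcondβ : LinearIndependent ℝ
        (fun k : {k : Fin p // 0 < β (Sum.inr (Sum.inr (Sum.inl k)))} => D k.1) := by
      have hcmp := hIli.comp
        (fun k : {k : Fin p // 0 < β (Sum.inr (Sum.inr (Sum.inl k)))} =>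
          (⟨k.1, by
            have h7 : 0 < α₀ (Sum.inr (Sum.inr (Sum.inl k.1))) := hβsupp _ k.2
            have h8 : v k.1 ≠ 0 := by
              simp only [hα₀, Sum.elim_inr, Sum.elim_inl] at h7
              exact ne_of_gt h7
            exact hvsupp k.1 h8⟩ : {i : Fin p // i ∈ I}))
        (by
          intro a' b' hab
          rcases a' with ⟨a', ha'⟩
          rcases b' with ⟨b', hb'⟩
          simpa using congrArg Subtype.val hab)
      exact hcmp
    refine ⟨h₀, ⟨β, hFeasβ, hBasicβ, Or.inl hcondβ⟩, ?_⟩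
    intro y hy
    rw [hzc y, ← hzx, hzc y₀]
    have := hy₀min y hy
    linarith
  -- ### assemble the two statements
  constructor
  · -- the equivalence of the two minimization problems
    intro zstar
    constructor
    · rintro ⟨hmem, hlb⟩
      obtain ⟨x₁, hx₁, y₁, hy₁, hz₁⟩ := hmem
      obtain ⟨h₁, hh₁H, hh₁le⟩ := hKey x₁ hx₁
      have hle1 : h₁ ≤ zstar := by
        have := hh₁le y₁ hy₁
        rw [hz₁] at this
        exact this
      have hge1 : zstar ≤ h₁ := by
        obtain ⟨α, hαF, hαB, hαc⟩ := hh₁H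
        obtain ⟨x₂, hx₂, y₂, hy₂, hz₂⟩ := hLemB h₁ α hαF hαc
        exact le_trans (hlb (Set.mem_image2_of_mem hx₂ hy₂)) hz₂
      have hzH : zstar = h₁ := le_antisymm hge1 hle1
      constructor
      · rw [hzH]; exact hh₁H
      · intro h hh
        obtain ⟨α, hαF, hαB, hαc⟩ := hh
        obtain ⟨x₂, hx₂, y₂, hy₂, hz₂⟩ := hLemB h α hαF hαc
        exact le_trans (hlb (Set.mem_image2_of_mem hx₂ hy₂)) hz₂
    · rintro ⟨hmem, hlb⟩
      have hlb' : ∀ w ∈ Set.image2 z X Y, zstar ≤ w := by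
        rintro w ⟨x, hx, y, hy, rfl⟩
        obtain ⟨h₁, hh₁H, hh₁le⟩ := hKey x hx
        exact le_trans (hlb hh₁H) (hh₁le y hy)
      constructor
      · obtain ⟨α, hαF, hαB, hαc⟩ := hmem
        obtain ⟨x₂, hx₂, y₂, hy₂, hz₂⟩ := hLemB zstar α hαF hαc
        have h9 : zstar ≤ z x₂ y₂ := hlb' _ (Set.mem_image2_of_mem hx₂ hy₂)
        have h10 : z x₂ y₂ = zstar := le_antisymm hz₂ h9
        rw [← h10]
        exact Set.mem_image2_of_mem hx₂ hy₂
      · exact hlb'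
  · -- recovery of the optimal solutions
    intro zstar hzleast α hαF hαB hαc
    have hxX : (fun j => α (Sum.inl j)) ∈ X := hXmem zstar α hαF
    obtain ⟨hnn, h1, h2, h3⟩ := (hFeas zstar α).mp hαF
    have hlast : 0 ≤ α (Sum.inr (Sum.inr (Sum.inr ()))) :=
      hnn (Sum.inr (Sum.inr (Sum.inr ())))
    constructor
    · intro hex y hyD hysum
      have hyY : y ∈ Y := by rw [hYdef]; exact hyD
      have hzy := hzval zstar α hαF y hysum
      have hge : zstar ≤ z (fun j => α (Sum.inl j)) y :=
        hzleast.2 (Set.mem_image2_of_mem hxX hyY)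
      linarith
    · intro hnex
      push_neg at hnex
      have hv0 : ∀ k, α (Sum.inr (Sum.inr (Sum.inl k))) = 0 :=
        fun k => le_antisymm (hnex k) (hnn (Sum.inr (Sum.inr (Sum.inl k))))
      obtain ⟨y₁, hy₁⟩ := hYne
      have hsumc : ∀ y : Fin m → ℝ,
          ∑ j, (∑ k, D k j * α (Sum.inr (Sum.inr (Sum.inl k)))) * y j
            = ∑ k, d k * α (Sum.inr (Sum.inr (Sum.inl k))) := by
        intro y; simp [hv0]
      have hzy₁ := hzval zstar α hαF y₁ (hsumc y₁)
      have hge₁ : zstar ≤ z (fun j => α (Sum.inl j)) y₁ :=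
        hzleast.2 (Set.mem_image2_of_mem hxX hy₁)
      have hlast0 : α (Sum.inr (Sum.inr (Sum.inr ()))) = 0 := by linarith
      refine ⟨hv0, hlast0, ?_⟩
      intro y hy
      have hzy := hzval zstar α hαF y (hsumc y)
      rw [hlast0] at hzy
      linarith
end

section
/- Assume the system S is consistent and fix i₀ ∈ {k, …, r}. The function z(α) = Σ_{j=r+1}^{r+s−1} w_{i₀,j} α_j − w_{i₀,0} is bounded above on the set of solutions of S if and only if the following system has no solution in nonnegative variables α_{r+1}, …, α_{r+s}: Σ_{j=r+1}^{r+s−1} w_{i,j} α_j ≤ 0 for i = 1, …, k−1; Σ_{j=r+1}^{r+s−1} w_{i,j} α_j + w_{i,r+s} α_{r+s} ≤ 0 for i = k, …, r; and Σ_{j=r+1}^{r+s−1} w_{i₀,j} α_j = 1. If this system has a solution, then z is unbounded above on the set of solutions of S. -/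
open Finset

private lemma cone_cara {E : Type*} [AddCommGroup E] [Module ℝ E]
    {ι : Type*} [Fintype ι] (v : ι → E) (t : ι → ℝ) (ht : ∀ i, 0 ≤ t i) :
    ∃ t' : ι → ℝ, (∀ i, 0 ≤ t' i) ∧ (∑ i, t' i • v i) = (∑ i, t i • v i) ∧
      LinearIndependent ℝ (fun i : {i // t' i ≠ 0} => v i) := by
  classical
  suffices H : ∀ (m : ℕ) (t : ι → ℝ), (∀ i, 0 ≤ t i) →
      (Finset.univ.filter fun i => t i ≠ 0).card ≤ m →
      ∃ t' : ι → ℝ, (∀ i, 0 ≤ t' i) ∧ (∑ i, t' i • v i) = (∑ i, t i • v i) ∧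
        LinearIndependent ℝ (fun i : {i // t' i ≠ 0} => v i) from
    H _ t ht le_rfl
  intro m
  induction m with
  | zero =>
    intro t ht hcard
    have h0 : ∀ i, t i = 0 := by
      intro i
      by_contra h
      have hmem : i ∈ Finset.univ.filter fun i => t i ≠ 0 := by simp [h]
      have := Finset.card_pos.mpr ⟨i, hmem⟩
      omega
    refine ⟨t, ht, rfl, ?_⟩
    have : IsEmpty {i // t i ≠ 0} := ⟨fun ⟨i, hi⟩ => hi (h0 i)⟩
    exact linearIndependent_empty_type
  | succ m IH =>
    intro t ht hcard
    by_cases hli : LinearIndependent ℝ (fun i : {i // t i ≠ 0} => v i)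
    · exact ⟨t, ht, rfl, hli⟩
    have hrel : ∃ g : {i // t i ≠ 0} → ℝ, (∑ i, g i • v ↑i) = 0 ∧ ∃ i, 0 < g i := by
      obtain ⟨g, hgsum, i₁, hgi₁⟩ := Fintype.not_linearIndependent_iff.mp hli
      rcases lt_or_gt_of_ne hgi₁ with h | h
      · refine ⟨-g, ?_, i₁, by simpa using h⟩
        simp only [Pi.neg_apply, neg_smul, Finset.sum_neg_distrib, hgsum, neg_zero]
      · exact ⟨g, hgsum, i₁, h⟩
    obtain ⟨g, hgsum, i₂, hgi₂⟩ := hrel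
    set gh : ι → ℝ := fun i => if h : t i ≠ 0 then g ⟨i, h⟩ else 0 with hghdef
    have hghsum : (∑ i, gh i • v i) = 0 := by
      have h1 : (∑ i ∈ Finset.univ.filter fun i => t i ≠ 0, gh i • v i)
          = ∑ i, gh i • v i := by
        apply Finset.sum_filter_of_ne
        intro x _ hx
        by_contra h
        apply hx
        simp only [hghdef]
        rw [dif_neg (by simp [h] : ¬ t x ≠ 0)]
        exact zero_smul ℝ (v x)
      have h2 : (∑ i ∈ Finset.univ.filter fun i => t i ≠ 0, gh i • v i)
          = ∑ i : {i // t i ≠ 0}, gh ↑i • v ↑i := by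
        apply Finset.sum_subtype
        intro x; simp
      rw [← h1, h2, ← hgsum]
      apply Finset.sum_congr rfl
      intro x _
      simp [hghdef, x.2]
    have hghmem : ∀ i, gh i ≠ 0 → t i ≠ 0 := by
      intro i h
      by_contra ht0
      simp [hghdef, ht0] at h
    set T : Finset ι := Finset.univ.filter fun i => 0 < gh i with hTdef
    have hT : T.Nonempty := ⟨i₂, by simp [hTdef, hghdef, i₂.2, hgi₂]⟩
    set lam : ℝ := T.inf' hT fun i => t i / gh i with hlamdef
    obtain ⟨istar, histar, hlameq⟩ := Finset.exists_mem_eq_inf' hT fun i => t i / gh i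
    have hghistar : 0 < gh istar := by simpa [hTdef] using histar
    have hlam0 : 0 ≤ lam := by
      rw [hlamdef, hlameq]
      exact div_nonneg (ht istar) hghistar.le
    set t' : ι → ℝ := fun i => t i - lam * gh i with ht'def
    have ht' : ∀ i, 0 ≤ t' i := by
      intro i
      by_cases hpos : 0 < gh i
      · have hle : lam ≤ t i / gh i := Finset.inf'_le _ (by simp [hTdef, hpos])
        have := (le_div_iff₀ hpos).mp hle
        simp only [ht'def]; linarith
      · push_neg at hpos
        have : lam * gh i ≤ 0 := mul_nonpos_of_nonneg_of_nonpos hlam0 hpos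
        have := ht i
        simp only [ht'def]; linarith
    have hsum' : (∑ i, t' i • v i) = ∑ i, t i • v i := by
      simp only [ht'def, sub_smul, Finset.sum_sub_distrib, mul_smul, ← Finset.smul_sum,
        hghsum, smul_zero, sub_zero]
    have ht'istar : t' istar = 0 := by
      simp only [ht'def, hlamdef, hlameq]
      field_simp
      ring
    have hsub : (Finset.univ.filter fun i => t' i ≠ 0)
        ⊆ (Finset.univ.filter fun i => t i ≠ 0).erase istar := by
      intro i hi
      simp only [Finset.mem_filter, Finset.mem_univ, true_and] at hi
      rw [Finset.mem_erase]
      constructor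
      · rintro rfl; exact hi ht'istar
      · simp only [Finset.mem_filter, Finset.mem_univ, true_and]
        by_contra ht0
        have hgh0 : gh i = 0 := by
          by_contra h; exact hghmem i h ht0
        simp [ht'def, ht0, hgh0] at hi
    have hmemistar : istar ∈ Finset.univ.filter fun i => t i ≠ 0 := by
      simp only [Finset.mem_filter, Finset.mem_univ, true_and]
      exact hghmem istar hghistar.ne'
    have hcard' : (Finset.univ.filter fun i => t' i ≠ 0).card ≤ m := by
      have h1 := Finset.card_le_card hsub
      rw [Finset.card_erase_of_mem hmemistar] at h1
      have h2 := Finset.card_pos.mpr ⟨istar, hmemistar⟩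
      omega
    obtain ⟨t'', h1, h2, h3⟩ := IH t' ht' hcard'
    exact ⟨t'', h1, h2.trans hsum', h3⟩
private lemma cone_isClosed {n : ℕ} {ι : Type*} [Fintype ι]
    (v : ι → EuclideanSpace ℝ (Fin n)) :
    IsClosed {x : EuclideanSpace ℝ (Fin n) |
      ∃ t : ι → ℝ, (∀ i, 0 ≤ t i) ∧ x = ∑ i, t i • v i} := by
  classical
  have key : ∀ S : Finset ι, LinearIndependent ℝ (fun i : ↥S => v ↑i) →
      IsClosed {x : EuclideanSpace ℝ (Fin n) |
        ∃ t : ι → ℝ, (∀ i, 0 ≤ t i) ∧ (∀ i, i ∉ S → t i = 0) ∧ x = ∑ i, t i • v i} := by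
    intro S hli
    let f : (↥S → ℝ) →ₗ[ℝ] EuclideanSpace ℝ (Fin n) :=
      { toFun := fun u => ∑ i : ↥S, u i • v ↑i
        map_add' := by
          intro a b
          simp [add_smul, Finset.sum_add_distrib]
        map_smul' := by
          intro c a
          simp [mul_smul, Finset.smul_sum] }
    have hker : LinearMap.ker f = ⊥ := by
      rw [LinearMap.ker_eq_bot']
      intro u hu
      have := Fintype.linearIndependent_iff.mp hli u hu
      funext i
      exact this i
    have hemb : Topology.IsClosedEmbedding f := LinearMap.isClosedEmbedding_of_injective hker
    have hposcl : IsClosed {u : ↥S → ℝ | ∀ i, 0 ≤ u i} := by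
      have : {u : ↥S → ℝ | ∀ i, 0 ≤ u i} = ⋂ i, {u : ↥S → ℝ | 0 ≤ u i} := by
        ext u; simp [Set.mem_iInter]
      rw [this]
      exact isClosed_iInter fun i => isClosed_le continuous_const (continuous_apply i)
    have himg : {x : EuclideanSpace ℝ (Fin n) |
        ∃ t : ι → ℝ, (∀ i, 0 ≤ t i) ∧ (∀ i, i ∉ S → t i = 0) ∧ x = ∑ i, t i • v i}
        = f '' {u : ↥S → ℝ | ∀ i, 0 ≤ u i} := by
      ext x
      constructor
      · rintro ⟨t, ht0, htS, rfl⟩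
        refine ⟨fun i => t ↑i, fun i => ht0 ↑i, ?_⟩
        show (∑ i : ↥S, t ↑i • v ↑i) = ∑ i, t i • v i
        rw [Finset.sum_coe_sort S (fun i => t i • v i)]
        apply Finset.sum_subset (Finset.subset_univ S)
        intro i _ hiS
        rw [htS i hiS, zero_smul]
      · rintro ⟨u, hu, rfl⟩
        refine ⟨fun i => if h : i ∈ S then u ⟨i, h⟩ else 0, ?_, ?_, ?_⟩
        · intro i
          by_cases h : i ∈ S
          · simpa [h] using hu ⟨i, h⟩
          · simp [h]
        · intro i h; simp [h]
        · show f u = _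
          have : (∑ i, (if h : i ∈ S then u ⟨i, h⟩ else 0) • v i)
              = ∑ i ∈ S, (if h : i ∈ S then u ⟨i, h⟩ else 0) • v i := by
            symm
            apply Finset.sum_subset (Finset.subset_univ S)
            intro i _ hiS
            simp [hiS]
          rw [this, ← Finset.sum_coe_sort S
            (fun i => (if h : i ∈ S then u ⟨i, h⟩ else 0) • v i)]
          show _ = ∑ i : ↥S, (if h : (i : ι) ∈ S then u ⟨↑i, h⟩ else 0) • v ↑i
          apply Finset.sum_congr rfl
          intro i _
          simp [i.2]
    rw [himg]
    exact hemb.isClosedMap _ hposcl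
  have cover : {x : EuclideanSpace ℝ (Fin n) |
      ∃ t : ι → ℝ, (∀ i, 0 ≤ t i) ∧ x = ∑ i, t i • v i}
      = ⋃ S : Finset ι, ⋃ (_ : LinearIndependent ℝ (fun i : ↥S => v ↑i)),
        {x : EuclideanSpace ℝ (Fin n) |
          ∃ t : ι → ℝ, (∀ i, 0 ≤ t i) ∧ (∀ i, i ∉ S → t i = 0) ∧ x = ∑ i, t i • v i} := by
    ext x
    simp only [Set.mem_setOf_eq, Set.mem_iUnion]
    constructor
    · rintro ⟨t, ht0, rfl⟩
      obtain ⟨t', ht'0, ht'sum, ht'li⟩ := cone_cara v t ht0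
      refine ⟨Finset.univ.filter fun i => t' i ≠ 0, ?_, t', ht'0, ?_, ht'sum.symm⟩
      · exact LinearIndependent.comp ht'li
          (fun i : ↥(Finset.univ.filter fun i => t' i ≠ 0) =>
            (⟨↑i, (Finset.mem_filter.mp i.2).2⟩ : {i // t' i ≠ 0}))
          (fun a b hab => Subtype.ext (by simpa using congrArg Subtype.val hab))
      · intro i hi
        by_contra h
        exact hi (by simp [h])
    · rintro ⟨S, _, t, ht0, _, rfl⟩
      exact ⟨t, ht0, rfl⟩
  rw [cover]
  refine isClosed_iUnion_of_finite fun S => ?_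
  classical
  rw [Set.iUnion_eq_if]
  by_cases h : LinearIndependent ℝ (fun i : ↥S => v ↑i)
  · rw [if_pos h]
    exact key S h
  · rw [if_neg h]
    exact isClosed_empty
private lemma hyperplane_sep_old {E : Type*} [NormedAddCommGroup E] [InnerProductSpace ℝ E]
    [CompleteSpace E] (K : ConvexCone ℝ E) (h0 : (0 : E) ∈ K) (hc : IsClosed (K : Set E))
    {b : E} (hb : b ∉ K) : ∃ y : E, (∀ x ∈ K, 0 ≤ inner ℝ x y) ∧ inner ℝ y b < (0 : ℝ) := by
  let C : ProperCone ℝ E :=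
    { toSubmodule :=
        { carrier := K
          add_mem' := fun ha hb => K.add_mem ha hb
          zero_mem' := h0
          smul_mem' := by
            intro c x hx
            rcases eq_or_lt_of_le c.2 with hc0 | hc0
            · have : c = 0 := NNReal.coe_eq_zero.mp hc0.symm
              subst this
              simpa using h0
            · exact K.smul_mem hc0 hx }
      isClosed' := hc }
  obtain ⟨y, hy1, hy2⟩ := C.hyperplane_separation' (x₀ := b) hb
  exact ⟨y, fun x hx => hy1 x hx, by rwa [real_inner_comm]⟩
/-- Lemma 9 of the paper: boundedness criterion for the linear function
`z_{i₀}` on the solution set of the system (blinn21). -/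
theorem stmt_19
    (r s k : ℕ) (hr : 0 < r) (hs : 2 ≤ s) (hk1 : 1 ≤ k) (hkr : k ≤ r)
    (w0 : Fin r → ℝ) (w : Fin r → Fin (s - 1) → ℝ) (wlast : Fin r → ℝ)
    (hsmall : ∀ i : Fin r, (i : ℕ) + 1 < k → 0 ≤ w0 i ∧ wlast i = 0)
    (hbig : ∀ i : Fin r, k ≤ (i : ℕ) + 1 → 0 < w0 i ∧ wlast i < 0)
    (Feas : (Fin r → ℝ) → (Fin (s - 1) → ℝ) → ℝ → Prop)
    (hFeas : ∀ (α : Fin r → ℝ) (β : Fin (s - 1) → ℝ) (γ : ℝ), Feas α β γ ↔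
      (0 ≤ α ∧ 0 ≤ β ∧ 0 ≤ γ ∧
        ∀ i : Fin r, α i + (∑ j, w i j * β j) + wlast i * γ = w0 i))
    (hconsistent : ∃ α β γ, Feas α β γ)
    (i₀ : Fin r) (hi₀ : k ≤ (i₀ : ℕ) + 1) :
    (BddAbove {v : ℝ | ∃ α β γ, Feas α β γ ∧ v = (∑ j, w i₀ j * β j) - w0 i₀} ↔
      ¬ ∃ (β : Fin (s - 1) → ℝ) (γ : ℝ), 0 ≤ β ∧ 0 ≤ γ ∧
        (∀ i : Fin r, (i : ℕ) + 1 < k → (∑ j, w i j * β j) ≤ 0) ∧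
        (∀ i : Fin r, k ≤ (i : ℕ) + 1 → (∑ j, w i j * β j) + wlast i * γ ≤ 0) ∧
        (∑ j, w i₀ j * β j) = 1) ∧
    ((∃ (β : Fin (s - 1) → ℝ) (γ : ℝ), 0 ≤ β ∧ 0 ≤ γ ∧
        (∀ i : Fin r, (i : ℕ) + 1 < k → (∑ j, w i j * β j) ≤ 0) ∧
        (∀ i : Fin r, k ≤ (i : ℕ) + 1 → (∑ j, w i j * β j) + wlast i * γ ≤ 0) ∧
        (∑ j, w i₀ j * β j) = 1) →
      ∀ M : ℝ, ∃ α β γ, Feas α β γ ∧ M < (∑ j, w i₀ j * β j) - w0 i₀) := by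
  classical
  -- the "split by k" form of the homogeneous system is equivalent to the uniform one
  have hPP' : (∃ (β : Fin (s - 1) → ℝ) (γ : ℝ), 0 ≤ β ∧ 0 ≤ γ ∧
        (∀ i : Fin r, (i : ℕ) + 1 < k → (∑ j, w i j * β j) ≤ 0) ∧
        (∀ i : Fin r, k ≤ (i : ℕ) + 1 → (∑ j, w i j * β j) + wlast i * γ ≤ 0) ∧
        (∑ j, w i₀ j * β j) = 1)
      ↔ (∃ (β : Fin (s - 1) → ℝ) (γ : ℝ), 0 ≤ β ∧ 0 ≤ γ ∧
        (∀ i : Fin r, (∑ j, w i j * β j) + wlast i * γ ≤ 0) ∧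
        (∑ j, w i₀ j * β j) = 1) := by
    constructor
    · rintro ⟨β, γ, hβ, hγ, hsm, hbg, hone⟩
      refine ⟨β, γ, hβ, hγ, fun i => ?_, hone⟩
      rcases Nat.lt_or_ge ((i : ℕ) + 1) k with h | h
      · rw [(hsmall i h).2]
        simpa using hsm i h
      · exact hbg i h
    · rintro ⟨β, γ, hβ, hγ, hall, hone⟩
      refine ⟨β, γ, hβ, hγ, fun i h => ?_, fun i _ => hall i, hone⟩
      have h2 := hall i
      rw [(hsmall i h).2] at h2
      simpa using h2
  -- unboundedness from a solution of the homogeneous system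
  have hunb : (∃ (β : Fin (s - 1) → ℝ) (γ : ℝ), 0 ≤ β ∧ 0 ≤ γ ∧
        (∀ i : Fin r, (∑ j, w i j * β j) + wlast i * γ ≤ 0) ∧
        (∑ j, w i₀ j * β j) = 1) →
      ∀ M : ℝ, ∃ α β γ, Feas α β γ ∧ M < (∑ j, w i₀ j * β j) - w0 i₀ := by
    rintro ⟨β₁, γ₁, hβ₁, hγ₁, hineq, hone⟩ M
    obtain ⟨α₀, β₀, γ₀, hfeas⟩ := hconsistent
    rw [hFeas] at hfeas
    obtain ⟨hα₀, hβ₀, hγ₀, heq₀⟩ := hfeas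
    set c₀ : ℝ := (∑ j, w i₀ j * β₀ j) - w0 i₀ with hc₀
    set tt : ℝ := max 0 (M - c₀ + 1) with htt
    have htt0 : 0 ≤ tt := le_max_left _ _
    have httM : M - c₀ + 1 ≤ tt := le_max_right _ _
    have hsplit : ∀ i : Fin r, (∑ j, w i j * (β₀ j + tt * β₁ j))
        = (∑ j, w i j * β₀ j) + tt * ∑ j, w i j * β₁ j := by
      intro i
      rw [Finset.mul_sum, ← Finset.sum_add_distrib]
      apply Finset.sum_congr rfl
      intro j _
      ring
    refine ⟨fun i => α₀ i - tt * ((∑ j, w i j * β₁ j) + wlast i * γ₁),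
      fun j => β₀ j + tt * β₁ j, γ₀ + tt * γ₁, ?_, ?_⟩
    · rw [hFeas]
      refine ⟨?_, ?_, ?_, ?_⟩
      · intro i
        have h1 := hineq i
        have h2 : tt * ((∑ j, w i j * β₁ j) + wlast i * γ₁) ≤ 0 :=
          mul_nonpos_of_nonneg_of_nonpos htt0 h1
        have h3 := Pi.le_def.mp hα₀ i
        simp only [Pi.zero_apply] at h3 ⊢
        linarith
      · intro j
        have := Pi.le_def.mp hβ₀ j
        have := Pi.le_def.mp hβ₁ j
        simp only [Pi.zero_apply] at *
        have : 0 ≤ tt * β₁ j := mul_nonneg htt0 (by simpa using Pi.le_def.mp hβ₁ j)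
        have := Pi.le_def.mp hβ₀ j
        simp only [Pi.zero_apply] at this
        linarith
      · have : 0 ≤ tt * γ₁ := mul_nonneg htt0 hγ₁
        linarith
      · intro i
        rw [hsplit i]
        have := heq₀ i
        ring_nf
        ring_nf at this
        linarith
    · rw [hsplit i₀, hone]
      simp only [hc₀] at httM ⊢
      linarith
  refine ⟨⟨?_, ?_⟩, fun hP M => hunb (hPP'.mp hP) M⟩
  · -- BddAbove → ¬ P
    rintro ⟨M, hM⟩ hP
    obtain ⟨α, β, γ, hfeas, hval⟩ := hunb (hPP'.mp hP) M
    have : ((∑ j, w i₀ j * β j) - w0 i₀) ≤ M :=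
      hM ⟨α, β, γ, hfeas, rfl⟩
    linarith
  · -- ¬ P → BddAbove
    intro hnP
    rw [hPP'] at hnP
    -- set up the cone
    set V : (Fin (s - 1) ⊕ (Unit ⊕ (Fin r ⊕ Unit))) → EuclideanSpace ℝ (Fin (r + 1)) :=
      fun x =>
        Sum.elim (fun j => WithLp.toLp 2 (Fin.snoc (fun i => w i j) (-(w i₀ j)) : Fin (r+1) → ℝ))
          (Sum.elim (fun _ => WithLp.toLp 2 (Fin.snoc wlast 0 : Fin (r+1) → ℝ))
            (Sum.elim (fun i' => WithLp.toLp 2 (Fin.snoc (Pi.single i' 1) 0 : Fin (r+1) → ℝ))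
              (fun _ => WithLp.toLp 2 (Fin.snoc 0 1 : Fin (r+1) → ℝ)))) x with hV
    set KS : Set (EuclideanSpace ℝ (Fin (r + 1))) :=
      {x | ∃ t : (Fin (s - 1) ⊕ (Unit ⊕ (Fin r ⊕ Unit))) → ℝ,
        (∀ i, 0 ≤ t i) ∧ x = ∑ i, t i • V i} with hKS
    have hclosed : IsClosed KS := cone_isClosed V
    set K : ConvexCone ℝ (EuclideanSpace ℝ (Fin (r + 1))) :=
      { carrier := KS
        smul_mem' := by
          rintro c hc x ⟨t, ht, rfl⟩
          refine ⟨fun i => c * t i, fun i => mul_nonneg hc.le (ht i), ?_⟩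
          rw [Finset.smul_sum]
          exact Finset.sum_congr rfl fun i _ => by simp [smul_smul]
        add_mem' := by
          rintro x ⟨t, ht, rfl⟩ y ⟨u, hu, rfl⟩
          refine ⟨fun i => t i + u i, fun i => add_nonneg (ht i) (hu i), ?_⟩
          rw [← Finset.sum_add_distrib]
          exact Finset.sum_congr rfl fun i _ => by simp [add_smul] } with hK
    have hne : (K : Set (EuclideanSpace ℝ (Fin (r + 1)))).Nonempty :=
      ⟨0, ⟨0, fun i => le_refl 0, by simp⟩⟩
    set b : EuclideanSpace ℝ (Fin (r + 1)) :=
      WithLp.toLp 2 (Fin.snoc (fun _ => (0:ℝ)) (-1) : Fin (r+1) → ℝ) with hb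
    -- b is not in the cone
    have hbK : b ∉ K := by
      rintro ⟨t, ht, hbeq⟩
      have happ : ∀ p : Fin (r + 1), b p = ∑ i, t i * V i p := by
        intro p
        rw [hbeq, WithLp.ofLp_sum, Finset.sum_apply p Finset.univ _]
        rfl
      have hrow : ∀ i' : Fin r,
          (∑ x, t (Sum.inl x) * w i' x) + t (Sum.inr (Sum.inl default)) * wlast i'
            + t (Sum.inr (Sum.inr (Sum.inl i'))) = 0 := by
        intro i'
        have h := happ i'.castSucc
        rw [hb] at h
        simp only [Fin.snoc_castSucc] at h
        rw [Fintype.sum_sum_type, Fintype.sum_sum_type, Fintype.sum_sum_type] at h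
        simp only [hV, Sum.elim_inl, Sum.elim_inr, Fin.snoc_castSucc,
          Fintype.sum_unique, Pi.zero_apply, mul_zero, add_zero, zero_mul,
          Finset.sum_const_zero] at h
        have hsingle : (∑ i'' : Fin r, t (Sum.inr (Sum.inr (Sum.inl i''))) *
            (Pi.single i'' (1:ℝ) : Fin r → ℝ) i') = t (Sum.inr (Sum.inr (Sum.inl i'))) := by
          rw [Finset.sum_eq_single i']
          · simp
          · intro c _ hc'
            rw [Pi.single_apply, if_neg (fun hh => hc' hh.symm), mul_zero]
          · intro hmem; exact absurd (Finset.mem_univ i') hmem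
        rw [hsingle] at h
        linarith [h]
      have hlast : (∑ x, t (Sum.inl x) * w i₀ x)
          = 1 + t (Sum.inr (Sum.inr (Sum.inr default))) := by
        have h := happ (Fin.last r)
        rw [hb] at h
        simp only [Fin.snoc_last] at h
        rw [Fintype.sum_sum_type, Fintype.sum_sum_type, Fintype.sum_sum_type] at h
        simp only [hV, Sum.elim_inl, Sum.elim_inr, Fin.snoc_last,
          Fintype.sum_unique, mul_zero, add_zero, mul_one, zero_mul,
          Finset.sum_const_zero, mul_neg] at h
        rw [Finset.sum_neg_distrib] at h
        linarith [h]
      have hq : 0 ≤ t (Sum.inr (Sum.inr (Sum.inr default))) := ht _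
      have hcc1 : (1:ℝ) ≤ ∑ x, t (Sum.inl x) * w i₀ x := by
        rw [hlast]; linarith
      have hccpos : (0:ℝ) < ∑ x, t (Sum.inl x) * w i₀ x := lt_of_lt_of_le one_pos hcc1
      set cc : ℝ := ∑ x, t (Sum.inl x) * w i₀ x with hccdef
      apply hnP
      refine ⟨fun j => t (Sum.inl j) / cc, t (Sum.inr (Sum.inl default)) / cc, ?_, ?_, ?_, ?_⟩
      · intro j
        exact div_nonneg (ht _) hccpos.le
      · exact div_nonneg (ht _) hccpos.le
      · intro i
        show (∑ j, w i j * (t (Sum.inl j) / cc))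
          + wlast i * (t (Sum.inr (Sum.inl default)) / cc) ≤ 0
        have hA : (∑ j, w i j * t (Sum.inl j))
            + wlast i * t (Sum.inr (Sum.inl default)) ≤ 0 := by
          have hswap : (∑ j, w i j * t (Sum.inl j)) = ∑ x, t (Sum.inl x) * w i x :=
            Finset.sum_congr rfl fun j _ => mul_comm _ _
          rw [hswap]
          have := ht (Sum.inr (Sum.inr (Sum.inl i)))
          linarith [hrow i]
        have hdiv : (∑ j, w i j * (t (Sum.inl j) / cc))
            + wlast i * (t (Sum.inr (Sum.inl default)) / cc)
            = ((∑ j, w i j * t (Sum.inl j))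
              + wlast i * t (Sum.inr (Sum.inl default))) / cc := by
          rw [add_div, Finset.sum_div]
          congr 1
          · exact Finset.sum_congr rfl fun j _ => by ring
          · ring
        rw [hdiv]
        exact div_nonpos_of_nonpos_of_nonneg hA hccpos.le
      · show (∑ j, w i₀ j * (t (Sum.inl j) / cc)) = 1
        have hdiv : (∑ j, w i₀ j * (t (Sum.inl j) / cc))
            = (∑ x, t (Sum.inl x) * w i₀ x) / cc := by
          rw [Finset.sum_div]
          exact Finset.sum_congr rfl fun j _ => by ring
        rw [hdiv, ← hccdef, div_self hccpos.ne']
    -- separation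
    obtain ⟨y, hy1, hy2⟩ :=
      hyperplane_sep_old K ⟨0, fun i => le_refl 0, by simp⟩ hclosed hbK
    have hinner : ∀ x : EuclideanSpace ℝ (Fin (r + 1)),
        (inner ℝ x y : ℝ) = ∑ p, x p * y p := by
      intro x
      simp [PiLp.inner_apply, RCLike.inner_apply, conj_trivial]
      exact Finset.sum_congr rfl fun p _ => mul_comm _ _
    have ht0 : 0 < y (Fin.last r) := by
      have h := hy2
      rw [real_inner_comm, hinner b] at h
      rw [hb] at h
      rw [Fin.sum_univ_castSucc] at h
      simp only [Fin.snoc_castSucc, Fin.snoc_last, zero_mul, Finset.sum_const_zero,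
        neg_mul, one_mul, zero_add, neg_lt, neg_zero] at h
      linarith [h]
    -- generators belong to the cone
    have hgen : ∀ g, V g ∈ K := by
      intro g
      refine ⟨fun i => if i = g then 1 else 0, fun i => by positivity, ?_⟩
      rw [Finset.sum_congr rfl (g := fun i => if i = g then V i else 0)
        (fun i _ => by by_cases h : i = g <;> simp [h])]
      rw [Finset.sum_ite_eq' Finset.univ g V]
      simp
    have hgen' : ∀ g, 0 ≤ ∑ p, V g p * y p := by
      intro g
      have := hy1 (V g) (hgen g)
      rwa [hinner] at this
    have hcol : ∀ j : Fin (s - 1),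
        y (Fin.last r) * w i₀ j ≤ ∑ i, w i j * y (Fin.castSucc i) := by
      intro j
      have h := hgen' (Sum.inl j)
      rw [Fin.sum_univ_castSucc] at h
      simp only [hV, Sum.elim_inl, Fin.snoc_castSucc, Fin.snoc_last, neg_mul] at h
      nlinarith [h]
    have hslackgen : ∀ i' : Fin r, 0 ≤ y (Fin.castSucc i') := by
      intro i'
      have h := hgen' (Sum.inr (Sum.inr (Sum.inl i')))
      rw [Fin.sum_univ_castSucc] at h
      simp only [hV, Sum.elim_inr, Sum.elim_inl, Fin.snoc_castSucc, Fin.snoc_last,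
        zero_mul, add_zero] at h
      have hsingle : (∑ i : Fin r, (Pi.single i' (1:ℝ) : Fin r → ℝ) i * y i.castSucc)
          = y (Fin.castSucc i') := by
        rw [Finset.sum_eq_single i']
        · simp
        · intro c _ hc'
          rw [Pi.single_apply, if_neg hc', zero_mul]
        · intro hmem; exact absurd (Finset.mem_univ i') hmem
      rw [hsingle] at h
      exact h
    have hgam : 0 ≤ ∑ i, wlast i * y (Fin.castSucc i) := by
      have h := hgen' (Sum.inr (Sum.inl default))
      rw [Fin.sum_univ_castSucc] at h
      simp only [hV, Sum.elim_inr, Sum.elim_inl, Fin.snoc_castSucc, Fin.snoc_last,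
        zero_mul, add_zero] at h
      exact h
    -- the bound
    refine ⟨(∑ i, y (Fin.castSucc i) * w0 i) / y (Fin.last r) - w0 i₀, ?_⟩
    rintro v ⟨α, β, γ, hfeas, rfl⟩
    rw [hFeas] at hfeas
    obtain ⟨hα, hβ, hγ, heq⟩ := hfeas
    have key : y (Fin.last r) * (∑ j, w i₀ j * β j) ≤ ∑ i, y (Fin.castSucc i) * w0 i := by
      calc y (Fin.last r) * (∑ j, w i₀ j * β j)
          = ∑ j, (y (Fin.last r) * w i₀ j) * β j := by
            rw [Finset.mul_sum]
            exact Finset.sum_congr rfl fun j _ => by ring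
        _ ≤ ∑ j, (∑ i, w i j * y (Fin.castSucc i)) * β j := by
            apply Finset.sum_le_sum
            intro j _
            exact mul_le_mul_of_nonneg_right (hcol j) (Pi.le_def.mp hβ j)
        _ = ∑ i, (∑ j, w i j * β j) * y (Fin.castSucc i) := by
            have h1 : ∀ j ∈ Finset.univ, (∑ i, w i j * y (Fin.castSucc i)) * β j
                = ∑ i, (w i j * β j) * y (Fin.castSucc i) := by
              intro j _
              rw [Finset.sum_mul]
              exact Finset.sum_congr rfl fun i _ => by ring
            rw [Finset.sum_congr rfl h1, Finset.sum_comm]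
            exact Finset.sum_congr rfl fun i _ => (Finset.sum_mul _ _ _).symm
        _ = ∑ i, (w0 i - α i - wlast i * γ) * y (Fin.castSucc i) := by
            apply Finset.sum_congr rfl
            intro i _
            have h2 : (∑ j, w i j * β j) = w0 i - α i - wlast i * γ := by
              have := heq i; linarith
            rw [h2]
        _ = (∑ i, y (Fin.castSucc i) * w0 i) - (∑ i, α i * y (Fin.castSucc i))
            - γ * (∑ i, wlast i * y (Fin.castSucc i)) := by
            rw [Finset.mul_sum, ← Finset.sum_sub_distrib, ← Finset.sum_sub_distrib]
            exact Finset.sum_congr rfl fun i _ => by ring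
        _ ≤ ∑ i, y (Fin.castSucc i) * w0 i := by
            have h1 : 0 ≤ ∑ i, α i * y (Fin.castSucc i) :=
              Finset.sum_nonneg fun i _ =>
                mul_nonneg (Pi.le_def.mp hα i) (hslackgen i)
            have h2 : 0 ≤ γ * ∑ i, wlast i * y (Fin.castSucc i) := mul_nonneg hγ hgam
            linarith
    have hfin : (∑ j, w i₀ j * β j) ≤ (∑ i, y (Fin.castSucc i) * w0 i) / y (Fin.last r) := by
      rw [le_div_iff₀ ht0]
      linarith [key]
    linarith
end
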